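/- arXiv:1303.0247 — 4 statements merged into one kernel-verified Lean document; each statement's English description precedes it below -/
import Mathlib

section
/- Let n ≥ u ≥ 2 be integers and let m_1, …, m_k be positive integers with m_1 + ⋯ + m_k = C(n,u). Then the family K_n^u of all u-element subsets of an n-element set Ω can be partitioned into k pairwise disjoint sub-families H_1, …, H_k such that |H_i| = m_i for every i ∈ [k], and for every i ∈ [k] and every vertex ω ∈ Ω the number of sets in H_i containing ω lies between ⌊u·m_i/n⌋ and ⌈u·m_i/n⌉ (Baranyai's theorem). -/
set_option linter.unusedSectionVars false
set_option linter.unusedVariables false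
set_option maxHeartbeats 1000000

namespace Baranyai
open Finset List


open Finset List

lemma exists_partition {α : Type*} [DecidableEq α] :
    ∀ (k : ℕ) (m : Fin k → ℕ) (s : Finset α), (∑ i, m i) = s.card →
    ∃ H : Fin k → Finset α, (∀ i j, i ≠ j → Disjoint (H i) (H j)) ∧
      Finset.univ.biUnion H = s ∧ ∀ i, (H i).card = m i := by
  intro k
  induction k with
  | zero =>
    intro m s h
    have hs : s = ∅ := Finset.card_eq_zero.mp (by simpa using h.symm)
    exact ⟨fun i => ∅, fun i => i.elim0, by simp [hs], fun i => i.elim0⟩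
  | succ n ih =>
    intro m s h
    rw [Fin.sum_univ_succ] at h
    have h0 : m 0 ≤ s.card := by omega
    obtain ⟨t, hts, htc⟩ := Finset.exists_subset_card_eq h0
    have h' : (∑ i : Fin n, m i.succ) = (s \ t).card := by
      rw [Finset.card_sdiff_of_subset hts, htc]; omega
    obtain ⟨H', hd, hu, hc⟩ := ih (fun i : Fin n => m i.succ) (s \ t) h'
    have hsub : ∀ i, H' i ⊆ s \ t := by
      intro i
      rw [← hu]
      exact Finset.subset_biUnion_of_mem H' (Finset.mem_univ i)
    refine ⟨Fin.cons t H', ?_, ?_, ?_⟩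
    · intro i j hij
      rcases Fin.eq_zero_or_eq_succ i with rfl | ⟨i', rfl⟩ <;>
        rcases Fin.eq_zero_or_eq_succ j with rfl | ⟨j', rfl⟩
      · exact absurd rfl hij
      · simpa using Finset.disjoint_of_subset_right (hsub j') Finset.disjoint_sdiff
      · simpa using Finset.disjoint_of_subset_left (hsub i') Finset.sdiff_disjoint
      · simpa using hd i' j' (fun e => hij (by rw [e]))
    · ext x
      simp only [Finset.mem_biUnion, Finset.mem_univ, true_and]
      constructor
      · rintro ⟨i, hi⟩
        refine Fin.cases ?_ ?_ i hi
        · intro hx; exact hts hx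
        · intro i' hx
          have := hsub i' hx
          exact (Finset.mem_sdiff.mp this).1
      · intro hx
        by_cases hxt : x ∈ t
        · exact ⟨0, hxt⟩
        · have : x ∈ Finset.univ.biUnion H' := by
            rw [hu]; exact Finset.mem_sdiff.mpr ⟨hx, hxt⟩
          obtain ⟨i, _, hi⟩ := Finset.mem_biUnion.mp this
          exact ⟨i.succ, hi⟩
    · intro i
      refine Fin.cases ?_ ?_ i
      · exact htc
      · exact hc



open Finset List
variable {Ω : Type*} [Fintype Ω] [DecidableEq Ω] {k u : ℕ} {m : Fin k → ℕ}

def dg (s : Finset (Finset Ω)) (ω : Ω) : ℕ := (s.filter (fun E => ω ∈ E)).card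

def Valid (u : ℕ) {k : ℕ} (m : Fin k → ℕ) (H : Fin k → Finset (Finset Ω)) : Prop :=
  (∀ i j, i ≠ j → Disjoint (H i) (H j)) ∧
  (Finset.univ.biUnion H = Finset.powersetCard u (Finset.univ : Finset Ω)) ∧
  (∀ i, (H i).card = m i)

def phi (a b : Ω) (E : Finset Ω) : Finset Ω := insert b (E.erase a)

def Edge (H : Fin k → Finset (Finset Ω)) (a b : Ω) (x y : Fin k) : Prop :=
  ∃ E, E ∈ H x ∧ a ∈ E ∧ b ∉ E ∧ phi a b E ∈ H y

def Deficient (H : Fin k → Finset (Finset Ω)) (a b : Ω) (x : Fin k) : Prop :=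
  dg (H x) a < dg (H x) b

def EdgeND (H : Fin k → Finset (Finset Ω)) (a b : Ω) (x y : Fin k) : Prop :=
  ¬ Deficient H a b x ∧ Edge H a b x y

variable {a b : Ω}

lemma phi_inj (E E' : Finset Ω) (haE : a ∈ E) (hbE : b ∉ E) (haE' : a ∈ E') (hbE' : b ∉ E')
    (h : phi a b E = phi a b E') : E = E' := by
  have key : ∀ X : Finset Ω, a ∈ X → b ∉ X → insert a ((phi a b X).erase b) = X := by
    intro X haX hbX
    unfold phi
    rw [Finset.erase_insert (fun hc => hbX (Finset.mem_of_mem_erase hc)),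
      Finset.insert_erase haX]
  rw [← key E haE hbE, ← key E' haE' hbE', h]

/-- degree change in a single set after swapping out `E` and in `F`. -/
lemma dg_swapset_mem_notmem (s : Finset (Finset Ω)) (E F : Finset Ω)
    (hE : E ∈ s) (hF : F ∉ s) (ω : Ω) (hωE : ω ∈ E) (hωF : ω ∉ F) :
    dg (insert F (s.erase E)) ω + 1 = dg s ω := by
  unfold dg
  rw [Finset.filter_insert, if_neg hωF, Finset.filter_erase]
  have hmem : E ∈ s.filter (fun X => ω ∈ X) := Finset.mem_filter.mpr ⟨hE, hωE⟩
  rw [Finset.card_erase_of_mem hmem]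
  have : 1 ≤ (s.filter (fun X => ω ∈ X)).card := Finset.card_pos.mpr ⟨E, hmem⟩
  omega

lemma dg_swapset_notmem_mem (s : Finset (Finset Ω)) (E F : Finset Ω)
    (hE : E ∈ s) (hF : F ∉ s) (ω : Ω) (hωE : ω ∉ E) (hωF : ω ∈ F) :
    dg (insert F (s.erase E)) ω = dg s ω + 1 := by
  unfold dg
  rw [Finset.filter_insert, if_pos hωF, Finset.filter_erase]
  have h1 : E ∉ s.filter (fun X => ω ∈ X) := fun hc => hωE (Finset.mem_filter.mp hc).2
  have h2 : F ∉ (s.filter (fun X => ω ∈ X)).erase E :=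
    fun hc => hF (Finset.mem_filter.mp (Finset.mem_of_mem_erase hc)).1
  rw [Finset.erase_eq_of_notMem h1, Finset.card_insert_of_notMem
    (fun hc => hF (Finset.mem_filter.mp hc).1)]

lemma dg_swapset_same (s : Finset (Finset Ω)) (E F : Finset Ω)
    (hE : E ∈ s) (hF : F ∉ s) (ω : Ω) (hsame : ω ∈ E ↔ ω ∈ F) :
    dg (insert F (s.erase E)) ω = dg s ω := by
  unfold dg
  rw [Finset.filter_insert, Finset.filter_erase]
  by_cases hω : ω ∈ E
  · rw [if_pos (hsame.mp hω)]
    have hmem : E ∈ s.filter (fun X => ω ∈ X) := Finset.mem_filter.mpr ⟨hE, hω⟩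
    rw [Finset.card_insert_of_notMem
      (fun hc => hF (Finset.mem_filter.mp (Finset.mem_of_mem_erase hc)).1),
      Finset.card_erase_of_mem hmem]
    have : 1 ≤ (s.filter (fun X => ω ∈ X)).card := Finset.card_pos.mpr ⟨E, hmem⟩
    omega
  · have h1 : E ∉ s.filter (fun X => ω ∈ X) := fun hc => hω (Finset.mem_filter.mp hc).2
    rw [if_neg (fun hc => hω (hsame.mpr hc)), Finset.erase_eq_of_notMem h1]

lemma swap_all (H : Fin k → Finset (Finset Ω)) (hH : Valid u m H) (hab : a ≠ b)
    (f h : Fin k) (hfh : f ≠ h) (E F : Finset Ω)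
    (hE : E ∈ H f) (hF : F ∈ H h)
    (haE : a ∈ E) (hbE : b ∉ E) (hbF : b ∈ F) (haF : a ∉ F)
    (hEF : ∀ ω, ω ≠ a → ω ≠ b → (ω ∈ E ↔ ω ∈ F)) :
    ∃ H' : Fin k → Finset (Finset Ω), Valid u m H' ∧
      (dg (H' f) a + 1 = dg (H f) a) ∧ (dg (H' f) b = dg (H f) b + 1) ∧
      (dg (H' h) a = dg (H h) a + 1) ∧ (dg (H' h) b + 1 = dg (H h) b) ∧
      (∀ j, j ≠ f → j ≠ h → H' j = H j) ∧
      (∀ j ω, ω ≠ a → ω ≠ b → dg (H' j) ω = dg (H j) ω) ∧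
      (H' f = insert F ((H f).erase E)) ∧ (H' h = insert E ((H h).erase F)) := by
  classical
  obtain ⟨hdis, hcov, hcard⟩ := hH
  have hEF' : E ≠ F := fun hc => hbE (hc ▸ hbF)
  have hFf : F ∉ H f := Finset.disjoint_left.mp (hdis h f (Ne.symm hfh)) hF
  have hEh : E ∉ H h := Finset.disjoint_left.mp (hdis f h hfh) hE
  set H' : Fin k → Finset (Finset Ω) :=
    fun j => if j = f then insert F ((H f).erase E)
      else if j = h then insert E ((H h).erase F) else H j with hH'def
  have hf' : H' f = insert F ((H f).erase E) := by simp [hH'def]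
  have hh' : H' h = insert E ((H h).erase F) := by simp [hH'def, Ne.symm hfh]
  have hother : ∀ j, j ≠ f → j ≠ h → H' j = H j := by
    intro j h1 h2; simp [hH'def, h1, h2]
  have hmem : ∀ (j : Fin k) (X : Finset Ω), X ∈ H' j ↔
      ((X ∈ H j ∧ X ≠ E ∧ X ≠ F) ∨ (j = f ∧ X = F) ∨ (j = h ∧ X = E)) := by
    intro j X
    by_cases h1 : j = f
    · rw [h1, hf']
      simp only [Finset.mem_insert, Finset.mem_erase]
      constructor
      · rintro (rfl | ⟨hne, hmem⟩)
        · exact Or.inr (Or.inl ⟨by trivial, rfl⟩)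
        · exact Or.inl ⟨hmem, hne, fun hc => hFf (hc ▸ hmem)⟩
      · rintro (⟨h2, h3, _⟩ | ⟨_, h4⟩ | ⟨h5, h6⟩)
        · exact Or.inr ⟨h3, h2⟩
        · exact Or.inl h4
        · exact absurd h5 hfh
    · by_cases h2 : j = h
      · rw [h2, hh']
        simp only [Finset.mem_insert, Finset.mem_erase]
        constructor
        · rintro (rfl | ⟨hne, hmem⟩)
          · exact Or.inr (Or.inr ⟨by trivial, rfl⟩)
          · exact Or.inl ⟨hmem, fun hc => hEh (hc ▸ hmem), hne⟩
        · rintro (⟨h3, _, h4⟩ | ⟨h5, _⟩ | ⟨_, h6⟩)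
          · exact Or.inr ⟨h4, h3⟩
          · exact absurd h5 (Ne.symm hfh)
          · exact Or.inl h6
      · rw [hother j h1 h2]
        constructor
        · intro hX
          refine Or.inl ⟨hX, ?_, ?_⟩
          · rintro rfl; exact Finset.disjoint_left.mp (hdis j f h1) hX hE
          · rintro rfl; exact Finset.disjoint_left.mp (hdis j h h2) hX hF
        · rintro (⟨hX, _, _⟩ | ⟨hc, _⟩ | ⟨hc, _⟩)
          · exact hX
          · exact absurd hc h1
          · exact absurd hc h2
  refine ⟨H', ⟨?_, ?_, ?_⟩, ?_, ?_, ?_, ?_, hother, ?_, hf', hh'⟩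
  · -- disjoint
    intro i j hij
    rw [Finset.disjoint_left]
    intro X hXi hXj
    rw [hmem] at hXi hXj
    rcases hXi with (⟨hXi, hne1, hne2⟩ | ⟨hif, hXF⟩ | ⟨hih, hXE⟩) <;>
      rcases hXj with (⟨hXj, hne1', hne2'⟩ | ⟨hjf, hXF'⟩ | ⟨hjh, hXE'⟩)
    · exact Finset.disjoint_left.mp (hdis i j hij) hXi hXj
    · exact hne2 hXF'
    · exact hne1 hXE'
    · exact hne2' hXF
    · exact hij (hif.trans hjf.symm)
    · exact hEF' (by rw [← hXE', hXF])
    · exact hne1' hXE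
    · exact hEF' (by rw [← hXE, hXF'])
    · exact hij (hih.trans hjh.symm)
  · -- cover
    rw [← hcov]
    ext X
    simp only [Finset.mem_biUnion, Finset.mem_univ, true_and]
    constructor
    · rintro ⟨j, hj⟩
      rw [hmem] at hj
      rcases hj with (⟨hX, _, _⟩ | ⟨_, rfl⟩ | ⟨_, rfl⟩)
      · exact ⟨j, hX⟩
      · exact ⟨h, hF⟩
      · exact ⟨f, hE⟩
    · rintro ⟨j, hj⟩
      by_cases hXE : X = E
      · exact ⟨h, by rw [hmem]; exact Or.inr (Or.inr ⟨rfl, hXE⟩)⟩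
      · by_cases hXF : X = F
        · exact ⟨f, by rw [hmem]; exact Or.inr (Or.inl ⟨rfl, hXF⟩)⟩
        · exact ⟨j, by rw [hmem]; exact Or.inl ⟨hj, hXE, hXF⟩⟩
  · -- cards
    intro j
    by_cases h1 : j = f
    · rw [h1, hf', Finset.card_insert_of_notMem
        (fun hc => hFf (Finset.mem_of_mem_erase hc)), Finset.card_erase_of_mem hE]
      have : 1 ≤ (H f).card := Finset.card_pos.mpr ⟨E, hE⟩
      rw [← hcard f]; omega
    · by_cases h2 : j = h
      · rw [h2, hh', Finset.card_insert_of_notMem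
          (fun hc => hEh (Finset.mem_of_mem_erase hc)), Finset.card_erase_of_mem hF]
        have : 1 ≤ (H h).card := Finset.card_pos.mpr ⟨F, hF⟩
        rw [← hcard h]; omega
      · rw [hother j h1 h2]; exact hcard j
  · rw [hf']; exact dg_swapset_mem_notmem (H f) E F hE hFf a haE haF
  · rw [hf']; exact dg_swapset_notmem_mem (H f) E F hE hFf b hbE hbF
  · rw [hh']; exact dg_swapset_notmem_mem (H h) F E hF hEh a haF haE
  · rw [hh']; exact dg_swapset_mem_notmem (H h) F E hF hEh b hbF hbE
  · intro j ω hωa hωb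
    by_cases h1 : j = f
    · rw [h1, hf']; exact dg_swapset_same (H f) E F hE hFf ω (hEF ω hωa hωb)
    · by_cases h2 : j = h
      · rw [h2, hh']
        exact dg_swapset_same (H h) F E hF hEh ω (hEF ω hωa hωb).symm
      · rw [hother j h1 h2]

lemma chain_suffix {α : Type*} {R : α → α → Prop} :
    ∀ (l : List α) (x y : α), List.Chain R x l → y ∈ l →
    ∃ t, t.length < l.length ∧ List.Chain R y t ∧ (y :: t).getLast? = (x :: l).getLast? := by
  intro l
  induction l with
  | nil => intro x y _ hy; cases hy
  | cons c cs ih =>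
    intro x y hchain hy
    simp only [List.Chain, List.isChain_cons_cons] at hchain
    rcases List.mem_cons.mp hy with rfl | hy'
    · exact ⟨cs, by simp, hchain.2, by rw [List.getLast?_cons_cons]⟩
    · obtain ⟨t, ht1, ht2, ht3⟩ := ih c y hchain.2 hy'
      exact ⟨t, by simp only [List.length_cons]; omega, ht2,
        by rw [ht3, List.getLast?_cons_cons]⟩

lemma chain_transfer (H H' : Fin k → Finset (Finset Ω)) (f h : Fin k)
    (htrans : ∀ x y, x ≠ f → y ≠ f → Edge H a b x y → Edge H' a b x y)
    (hdg : ∀ j, j ≠ f → j ≠ h → ∀ ω, dg (H' j) ω = dg (H j) ω)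
    (hh : ¬ Deficient H' a b h) :
    ∀ (l : List (Fin k)) (x : Fin k), List.Chain (EdgeND H a b) x l →
      f ∉ x :: l → List.Chain (EdgeND H' a b) x l := by
  intro l
  induction l with
  | nil => intro x _ _; exact List.Chain.nil
  | cons c cs ih =>
    intro x hchain hf
    simp only [List.Chain, List.isChain_cons_cons] at hchain ⊢
    have hxf : x ≠ f := fun hc => hf (by rw [hc]; exact List.mem_cons_self (a := f))
    have hcf : c ≠ f := fun hc =>
      hf (hc ▸ List.mem_cons_of_mem x (List.mem_cons_self (a := c) (l := cs)))
    refine ⟨⟨?_, htrans x c hxf hcf hchain.1.2⟩,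
      ih c hchain.2 (fun hc => hf (List.mem_cons_of_mem _ hc))⟩
    by_cases hxh : x = h
    · rw [hxh]; exact hh
    · intro hdef
      refine hchain.1.1 ?_
      unfold Deficient at hdef ⊢
      rw [hdg x hxf hxh a, hdg x hxf hxh b] at hdef
      exact hdef

lemma chain_move (hab : a ≠ b) :
    ∀ (N : ℕ) (l : List (Fin k)), l.length ≤ N →
    ∀ (H : Fin k → Finset (Finset Ω)), Valid u m H → ∀ (f g : Fin k),
    List.Chain (EdgeND H a b) f l → (f :: l).getLast? = some g → Deficient H a b g →
    dg (H f) b + 2 ≤ dg (H f) a →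
    ∃ H' g', Valid u m H' ∧ Deficient H a b g' ∧ g' ≠ f ∧
      dg (H' f) a + 1 = dg (H f) a ∧ dg (H' f) b = dg (H f) b + 1 ∧
      dg (H' g') a = dg (H g') a + 1 ∧ dg (H' g') b + 1 = dg (H g') b ∧
      (∀ j, j ≠ f → j ≠ g' → ∀ ω, dg (H' j) ω = dg (H j) ω) ∧
      (∀ j ω, ω ≠ a → ω ≠ b → dg (H' j) ω = dg (H j) ω) := by
  intro N
  induction N with
  | zero =>
    intro l hl H hH f g hchain hlast hdefg hf
    rw [List.length_eq_zero_iff.mp (by omega : l.length = 0)] at hlast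
    simp only [List.getLast?_singleton, Option.some.injEq] at hlast
    rw [← hlast] at hdefg
    unfold Deficient at hdefg
    omega
  | succ N ih =>
    intro l hl H hH f g hchain hlast hdefg hf
    match l with
    | [] =>
      simp only [List.getLast?_singleton, Option.some.injEq] at hlast
      rw [← hlast] at hdefg
      unfold Deficient at hdefg
      omega
    | h :: l' =>
      by_cases hfl : f ∈ h :: l'
      · obtain ⟨t, ht1, ht2, ht3⟩ := chain_suffix (h :: l') f f hchain hfl
        refine ih t ?_ H hH f g ht2 ?_ hdefg hf
        · simp only [List.length_cons] at ht1 hl; omega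
        · rw [ht3, hlast]
      · simp only [List.Chain, List.isChain_cons_cons] at hchain
        obtain ⟨⟨hNDf, E, hEf, haE, hbE, hphiE⟩, hchain'⟩ := hchain
        set F := phi a b E with hFdef
        have hbF : b ∈ F := Finset.mem_insert_self b _
        have haF : a ∉ F := by
          rw [hFdef]; unfold phi
          simp [hab, Finset.mem_erase]
        have hEFother : ∀ ω, ω ≠ a → ω ≠ b → (ω ∈ E ↔ ω ∈ F) := by
          intro ω h1 h2; rw [hFdef]; unfold phi; simp [h1, h2]
        have hhf : h ≠ f := fun hc => hfl (by rw [hc]; exact List.mem_cons_self (a := f))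
        obtain ⟨H', hV', e1, e2, e3, e4, hoth, hvert, hf'eq, hh'eq⟩ :=
          swap_all H hH hab f h (Ne.symm hhf) E F hEf hphiE haE hbE hbF haF hEFother
        by_cases hdefh : Deficient H a b h
        · exact ⟨H', h, hV', hdefh, hhf, e1, e2, e3, e4,
            (fun j h1 h2 ω => by rw [hoth j h1 h2]), hvert⟩
        · have hg_mem : g ∈ h :: l' := by
            have h5 : (h :: l').getLast? = some g := by
              rw [← hlast, List.getLast?_cons_cons]
            obtain ⟨hne, heq⟩ := List.mem_getLast?_eq_getLast h5
            rw [heq]; exact List.getLast_mem hne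
          have hgf : g ≠ f := fun hc => hfl (hc ▸ hg_mem)
          have hgh : g ≠ h := by rintro rfl; exact hdefh hdefg
          have htrans : ∀ x y, x ≠ f → y ≠ f → Edge H a b x y → Edge H' a b x y := by
            rintro x y hxf hyf ⟨E₁, hE₁, haE₁, hbE₁, hphiE₁⟩
            refine ⟨E₁, ?_, haE₁, hbE₁, ?_⟩
            · by_cases hxh : x = h
              · rw [hxh] at hE₁ ⊢
                rw [hh'eq]
                refine Finset.mem_insert_of_mem (Finset.mem_erase.mpr ⟨?_, hE₁⟩)
                intro hc
                exact haF (hc ▸ haE₁)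
              · rw [hoth x hxf hxh]; exact hE₁
            · by_cases hyh : y = h
              · rw [hyh] at hphiE₁ ⊢
                rw [hh'eq]
                refine Finset.mem_insert_of_mem (Finset.mem_erase.mpr ⟨?_, hphiE₁⟩)
                intro hc
                have hEE : E₁ = E := phi_inj E₁ E haE₁ hbE₁ haE hbE hc
                rw [hEE] at hE₁
                by_cases hxf' : x = f
                · exact hxf hxf'
                · exact Finset.disjoint_left.mp ((hH.1) x f hxf') hE₁ hEf
              · rw [hoth y hyf hyh]; exact hphiE₁
          have hNDh' : ¬ Deficient H' a b h := by
            unfold Deficient at hdefh ⊢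
            omega
          have hchain'' : List.Chain (EdgeND H' a b) h l' :=
            chain_transfer H H' f h htrans (fun j h1 h2 ω => by rw [hoth j h1 h2])
              hNDh' l' h hchain' (fun hc => hfl hc)
          have hdefg' : Deficient H' a b g := by
            unfold Deficient
            rw [show H' g = H g from hoth g hgf hgh]
            exact hdefg
          have hfh' : dg (H' h) b + 2 ≤ dg (H' h) a := by
            unfold Deficient at hdefh
            omega
          have hlast' : (h :: l').getLast? = some g := by
            rw [← hlast, List.getLast?_cons_cons]
          obtain ⟨H'', g₂, hV'', hdef₂, hg₂h, f1, f2, f3, f4, hoth₂, hvert₂⟩ :=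
            ih l' (by simp only [List.length_cons] at hl; omega) H' hV' h g hchain'' hlast' hdefg' hfh'
          have hg₂f : g₂ ≠ f := by
            rintro rfl
            unfold Deficient at hdef₂
            omega
          have hoth_g₂ : H' g₂ = H g₂ := hoth g₂ hg₂f hg₂h
          refine ⟨H'', g₂, hV'', ?_, hg₂f, ?_, ?_, ?_, ?_, ?_, ?_⟩
          · unfold Deficient at hdef₂ ⊢
            rw [hoth_g₂] at hdef₂
            exact hdef₂
          · rw [hoth₂ f (Ne.symm hhf) (Ne.symm hg₂f) a]; exact e1
          · rw [hoth₂ f (Ne.symm hhf) (Ne.symm hg₂f) b]; exact e2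
          · rw [f3, hoth_g₂]
          · rw [f4, hoth_g₂]
          · intro j h1 h2 ω
            by_cases hjh : j = h
            · subst hjh
              by_cases hωa : ω = a
              · subst hωa; omega
              · by_cases hωb : ω = b
                · subst hωb; omega
                · rw [hvert₂ j ω hωa hωb, hvert j ω hωa hωb]
            · rw [hoth₂ j hjh h2 ω, show H' j = H j from hoth j h1 hjh]
          · intro j ω h1 h2
            rw [hvert₂ j ω h1 h2, hvert j ω h1 h2]

lemma dg_bridge (s : Finset (Finset Ω)) (a b : Ω) :
    dg s a + (s.filter (fun X => b ∈ X ∧ a ∉ X)).card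
      = dg s b + (s.filter (fun X => a ∈ X ∧ b ∉ X)).card := by
  have ha : dg s a = (s.filter (fun X => a ∈ X ∧ b ∈ X)).card
      + (s.filter (fun X => a ∈ X ∧ b ∉ X)).card := by
    unfold dg
    rw [← Finset.filter_filter, ← Finset.filter_filter,
      Finset.card_filter_add_card_filter_not]
  have hb : dg s b = (s.filter (fun X => a ∈ X ∧ b ∈ X)).card
      + (s.filter (fun X => b ∈ X ∧ a ∉ X)).card := by
    unfold dg
    have h0 : s.filter (fun X => a ∈ X ∧ b ∈ X)
        = (s.filter (fun X => b ∈ X)).filter (fun X => a ∈ X) := by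
      rw [Finset.filter_filter]
      exact Finset.filter_congr (fun X _ => by tauto)
    rw [h0, ← Finset.filter_filter, Finset.card_filter_add_card_filter_not]
  omega

lemma exists_path (H : Fin k → Finset (Finset Ω)) (hH : Valid u m H) (hab : a ≠ b)
    (f : Fin k) (hf : dg (H f) b + 2 ≤ dg (H f) a) :
    ∃ (g : Fin k) (l : List (Fin k)), List.Chain (EdgeND H a b) f l ∧
      (f :: l).getLast? = some g ∧ Deficient H a b g := by
  classical
  by_contra hcon
  push_neg at hcon
  -- the reachable set
  set R : Finset (Fin k) :=
    Finset.univ.filter (fun x => Relation.ReflTransGen (EdgeND H a b) f x) with hR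
  have hfR : f ∈ R := by
    rw [hR, Finset.mem_filter]
    exact ⟨Finset.mem_univ f, Relation.ReflTransGen.refl⟩
  have hRnd : ∀ x ∈ R, ¬ Deficient H a b x := by
    intro x hx hdef
    rw [hR, Finset.mem_filter] at hx
    obtain ⟨l, hl1, hl2⟩ := List.exists_isChain_cons_of_relationReflTransGen hx.2
    exact hcon x l hl1 (by rw [List.getLast?_eq_getLast_of_ne_nil (List.cons_ne_nil f l), hl2]) hdef
  -- counting
  set A : Finset (Finset Ω) := R.biUnion (fun j => (H j).filter (fun X => a ∈ X ∧ b ∉ X)) with hA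
  set B : Finset (Finset Ω) := R.biUnion (fun j => (H j).filter (fun X => b ∈ X ∧ a ∉ X)) with hB
  have hdisA : ∀ (x : Fin k), x ∈ R → ∀ (y : Fin k), y ∈ R → x ≠ y →
      Disjoint ((H x).filter (fun X => a ∈ X ∧ b ∉ X)) ((H y).filter (fun X => a ∈ X ∧ b ∉ X)) :=
    fun x _ y _ hxy => Finset.disjoint_filter_filter (hH.1 x y hxy)
  have hdisB : ∀ (x : Fin k), x ∈ R → ∀ (y : Fin k), y ∈ R → x ≠ y →
      Disjoint ((H x).filter (fun X => b ∈ X ∧ a ∉ X)) ((H y).filter (fun X => b ∈ X ∧ a ∉ X)) :=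
    fun x _ y _ hxy => Finset.disjoint_filter_filter (hH.1 x y hxy)
  have hAcard : A.card = ∑ j ∈ R, ((H j).filter (fun X => a ∈ X ∧ b ∉ X)).card :=
    Finset.card_biUnion hdisA
  have hBcard : B.card = ∑ j ∈ R, ((H j).filter (fun X => b ∈ X ∧ a ∉ X)).card :=
    Finset.card_biUnion hdisB
  -- the injection phi : A → B
  have hinj : A.card ≤ B.card := by
    apply Finset.card_le_card_of_injOn (phi a b)
    · intro X hX
      rw [hA, Finset.mem_coe, Finset.mem_biUnion] at hX
      obtain ⟨j, hjR, hXj⟩ := hX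
      rw [Finset.mem_filter] at hXj
      obtain ⟨hXj, haX, hbX⟩ := hXj
      -- phi X is a u-set, so it lies in some family
      have hcardX : X.card = u := by
        have := hH.2.1
        have hXmem : X ∈ Finset.univ.biUnion H :=
          Finset.mem_biUnion.mpr ⟨j, Finset.mem_univ j, hXj⟩
        rw [this, Finset.mem_powersetCard] at hXmem
        exact hXmem.2
      have hphicard : (phi a b X).card = u := by
        unfold phi
        rw [Finset.card_insert_of_notMem (fun hc => hbX (Finset.mem_of_mem_erase hc)),
          Finset.card_erase_of_mem haX]
        have : 1 ≤ X.card := Finset.card_pos.mpr ⟨a, haX⟩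
        omega
      have hphimem : phi a b X ∈ Finset.univ.biUnion H := by
        rw [hH.2.1, Finset.mem_powersetCard]
        exact ⟨Finset.subset_univ _, hphicard⟩
      obtain ⟨y, _, hy⟩ := Finset.mem_biUnion.mp hphimem
      have hyR : y ∈ R := by
        rw [hR, Finset.mem_filter] at hjR ⊢
        refine ⟨Finset.mem_univ y, hjR.2.tail ⟨hRnd j (by rw [hR, Finset.mem_filter]; exact hjR), X, hXj, haX, hbX, hy⟩⟩
      rw [hB, Finset.mem_coe, Finset.mem_biUnion]
      refine ⟨y, hyR, Finset.mem_filter.mpr ⟨hy, Finset.mem_insert_self b _, ?_⟩⟩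
      unfold phi
      simp [hab, Finset.mem_erase]
    · intro X hX Y hY hXY
      rw [hA, Finset.coe_biUnion] at hX hY
      simp only [Set.mem_iUnion, Finset.mem_coe, Finset.mem_filter] at hX hY
      obtain ⟨jx, _, _, haX, hbX⟩ := hX
      obtain ⟨jy, _, _, haY, hbY⟩ := hY
      exact phi_inj X Y haX hbX haY hbY hXY
  -- but sums say otherwise
  have hterm : ∀ j ∈ R, ((H j).filter (fun X => b ∈ X ∧ a ∉ X)).card
      ≤ ((H j).filter (fun X => a ∈ X ∧ b ∉ X)).card := by
    intro j hj
    have h1 := dg_bridge (H j) a b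
    have h2 : ¬ Deficient H a b j := hRnd j hj
    unfold Deficient at h2
    omega
  have hstrict : ((H f).filter (fun X => b ∈ X ∧ a ∉ X)).card + 2
      ≤ ((H f).filter (fun X => a ∈ X ∧ b ∉ X)).card := by
    have h1 := dg_bridge (H f) a b
    omega
  have hsum : ∑ j ∈ R, ((H j).filter (fun X => b ∈ X ∧ a ∉ X)).card
      < ∑ j ∈ R, ((H j).filter (fun X => a ∈ X ∧ b ∉ X)).card := by
    apply Finset.sum_lt_sum hterm
    exact ⟨f, hfR, by omega⟩
  omega

def Phi (H : Fin k → Finset (Finset Ω)) : ℕ := ∑ j, ∑ ω : Ω, (dg (H j) ω)^2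

lemma phi_decrease (H H' : Fin k → Finset (Finset Ω)) (f g : Fin k) (hfg : g ≠ f)
    (e1 : dg (H' f) a + 1 = dg (H f) a) (e2 : dg (H' f) b = dg (H f) b + 1)
    (e3 : dg (H' g) a = dg (H g) a + 1) (e4 : dg (H' g) b + 1 = dg (H g) b)
    (h5 : ∀ j, j ≠ f → j ≠ g → ∀ ω, dg (H' j) ω = dg (H j) ω)
    (h6 : ∀ j ω, ω ≠ a → ω ≠ b → dg (H' j) ω = dg (H j) ω)
    (hf : dg (H f) b + 2 ≤ dg (H f) a) (hg : dg (H g) a < dg (H g) b) (hab : a ≠ b) :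
    Phi H' < Phi H := by
  classical
  have hsplitF : ∀ (G : Fin k → ℕ), ∑ j, G j = G f + G g + ∑ j ∈ (Finset.univ.erase f).erase g, G j := by
    intro G
    rw [← Finset.add_sum_erase _ G (Finset.mem_univ f)]
    rw [← Finset.add_sum_erase _ G (Finset.mem_erase.mpr ⟨hfg, Finset.mem_univ g⟩)]
    ring
  have hsplitV : ∀ (G : Ω → ℕ), ∑ ω, G ω = G a + G b + ∑ ω ∈ (Finset.univ.erase a).erase b, G ω := by
    intro G
    rw [← Finset.add_sum_erase _ G (Finset.mem_univ a)]
    rw [← Finset.add_sum_erase _ G (Finset.mem_erase.mpr ⟨Ne.symm hab, Finset.mem_univ b⟩)]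
    ring
  unfold Phi
  rw [hsplitF (fun j => ∑ ω, (dg (H' j) ω)^2), hsplitF (fun j => ∑ ω, (dg (H j) ω)^2)]
  have hrest : ∑ j ∈ (Finset.univ.erase f).erase g, ∑ ω, (dg (H' j) ω)^2
      = ∑ j ∈ (Finset.univ.erase f).erase g, ∑ ω, (dg (H j) ω)^2 := by
    apply Finset.sum_congr rfl
    intro j hj
    rw [Finset.mem_erase, Finset.mem_erase] at hj
    exact Finset.sum_congr rfl (fun ω _ => by rw [h5 j hj.2.1 hj.1 ω])
  have hvrestF : ∑ ω ∈ (Finset.univ.erase a).erase b, (dg (H' f) ω)^2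
      = ∑ ω ∈ (Finset.univ.erase a).erase b, (dg (H f) ω)^2 := by
    apply Finset.sum_congr rfl
    intro ω hω
    rw [Finset.mem_erase, Finset.mem_erase] at hω
    rw [h6 f ω hω.2.1 hω.1]
  have hvrestG : ∑ ω ∈ (Finset.univ.erase a).erase b, (dg (H' g) ω)^2
      = ∑ ω ∈ (Finset.univ.erase a).erase b, (dg (H g) ω)^2 := by
    apply Finset.sum_congr rfl
    intro ω hω
    rw [Finset.mem_erase, Finset.mem_erase] at hω
    rw [h6 g ω hω.2.1 hω.1]
  rw [hsplitV (fun ω => (dg (H' f) ω)^2), hsplitV (fun ω => (dg (H f) ω)^2),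
    hsplitV (fun ω => (dg (H' g) ω)^2), hsplitV (fun ω => (dg (H g) ω)^2),
    hrest, hvrestF, hvrestG]
  have key : (dg (H' f) a)^2 + (dg (H' f) b)^2 + ((dg (H' g) a)^2 + (dg (H' g) b)^2)
      < (dg (H f) a)^2 + (dg (H f) b)^2 + ((dg (H g) a)^2 + (dg (H g) b)^2) := by
    nlinarith [e1, e2, e3, e4, hf, hg]
  omega

lemma improve_step (H : Fin k → Finset (Finset Ω)) (hH : Valid u m H)
    (hbal : ¬ ∀ (i : Fin k) (ω ω' : Ω), dg (H i) ω ≤ dg (H i) ω' + 1) :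
    ∃ H' : Fin k → Finset (Finset Ω), Valid u m H' ∧ Phi H' < Phi H := by
  push_neg at hbal
  obtain ⟨i, ω, ω', hlt⟩ := hbal
  have hab : ω ≠ ω' := by rintro rfl; omega
  obtain ⟨g, l, hchain, hlast, hdef⟩ := exists_path (a := ω) (b := ω') H hH
    hab i (by omega)
  obtain ⟨H', g', hV', hdefg', hg'i, e1, e2, e3, e4, h5, h6⟩ :=
    chain_move (a := ω) (b := ω') hab l.length l le_rfl H hH i g
      hchain hlast hdef (by omega)
  refine ⟨H', hV', ?_⟩
  exact phi_decrease (a := ω) (b := ω') H H' i g' hg'i e1 e2 e3 e4 h5 h6 (by omega) hdefg' hab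

lemma exists_balanced : ∀ (N : ℕ) (H : Fin k → Finset (Finset Ω)), Valid u m H → Phi H ≤ N →
    ∃ H', Valid u m H' ∧ ∀ (i : Fin k) (ω ω' : Ω), dg (H' i) ω ≤ dg (H' i) ω' + 1 := by
  intro N
  induction N with
  | zero =>
    intro H hH hphi
    by_cases hbal : ∀ (i : Fin k) (ω ω' : Ω), dg (H i) ω ≤ dg (H i) ω' + 1
    · exact ⟨H, hH, hbal⟩
    · obtain ⟨H', hV', hlt⟩ := improve_step H hH hbal
      omega
  | succ N ih =>
    intro H hH hphi
    by_cases hbal : ∀ (i : Fin k) (ω ω' : Ω), dg (H i) ω ≤ dg (H i) ω' + 1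
    · exact ⟨H, hH, hbal⟩
    · obtain ⟨H', hV', hlt⟩ := improve_step H hH hbal
      exact ih H' hV' (by omega)


lemma sum_dg (s : Finset (Finset Ω)) (u : ℕ) (hc : ∀ E ∈ s, E.card = u) :
    ∑ ω : Ω, dg s ω = u * s.card := by
  unfold dg
  simp_rw [Finset.card_filter]
  rw [Finset.sum_comm]
  rw [Finset.sum_congr rfl (fun E hE => ?_)]
  · rw [Finset.sum_const, smul_eq_mul, mul_comm]
  · show (∑ ω : Ω, if ω ∈ E then 1 else 0) = u
    rw [← Finset.card_filter, Finset.filter_univ_mem, hc E hE]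


lemma balanced_bounds {n u : ℕ} (hn : Fintype.card Ω = n) (hn0 : 0 < n)
    (s : Finset (Finset Ω)) (hc : ∀ E ∈ s, E.card = u)
    (hbal : ∀ ω ω' : Ω, dg s ω ≤ dg s ω' + 1) (ω : Ω) :
    ⌊(u * s.card : ℚ) / n⌋ ≤ (dg s ω : ℤ) ∧ (dg s ω : ℤ) ≤ ⌈(u * s.card : ℚ) / n⌉ := by
  have hsum := sum_dg s u hc
  have hω : ∑ ω' : Ω, dg s ω' = dg s ω + ∑ ω' ∈ Finset.univ.erase ω, dg s ω' := by
    rw [Finset.add_sum_erase _ _ (Finset.mem_univ ω)]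
  have hcard : (Finset.univ.erase ω).card = n - 1 := by
    rw [Finset.card_erase_of_mem (Finset.mem_univ ω), Finset.card_univ, hn]
  -- upper estimate for the total
  have hup : u * s.card ≤ dg s ω + (n - 1) * (dg s ω + 1) := by
    rw [← hsum, hω]
    have : ∑ ω' ∈ Finset.univ.erase ω, dg s ω' ≤ (n-1) * (dg s ω + 1) := by
      calc ∑ ω' ∈ Finset.univ.erase ω, dg s ω'
          ≤ ∑ _ω' ∈ Finset.univ.erase ω, (dg s ω + 1) :=
            Finset.sum_le_sum (fun x _ => hbal x ω)
        _ = (n-1) * (dg s ω + 1) := by rw [Finset.sum_const, smul_eq_mul, hcard]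
    omega
  have hlo : dg s ω + (n - 1) * dg s ω ≤ u * s.card + (n - 1) := by
    rw [← hsum, hω]
    have : (n-1) * dg s ω ≤ ∑ ω' ∈ Finset.univ.erase ω, (dg s ω' + 1) := by
      calc (n-1) * dg s ω = ∑ _ω' ∈ Finset.univ.erase ω, dg s ω := by
            rw [Finset.sum_const, smul_eq_mul, hcard]
        _ ≤ _ := Finset.sum_le_sum (fun x _ => hbal ω x)
    rw [Finset.sum_add_distrib, Finset.sum_const, smul_eq_mul, hcard] at this
    omega
  zify [show 1 ≤ n by omega] at hup hlo
  constructor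
  · have h1 : ⌊(u * s.card : ℚ) / n⌋ < (dg s ω : ℤ) + 1 := by
      rw [Int.floor_lt, div_lt_iff₀ (by exact_mod_cast hn0)]
      have h2 : (u * s.card : ℤ) < ((dg s ω : ℤ) + 1) * n := by nlinarith [hup]
      exact_mod_cast h2
    omega
  · have h1 : ((dg s ω : ℤ) - 1) < ⌈(u * s.card : ℚ) / n⌉ := by
      rw [Int.lt_ceil, lt_div_iff₀ (by exact_mod_cast hn0)]
      have h2 : ((dg s ω : ℤ) - 1) * n < (u * s.card : ℤ) := by nlinarith [hlo]
      exact_mod_cast h2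
    omega


end Baranyai




/-- **Baranyai's theorem.** Let `n ≥ u ≥ 2` and let `m₁, …, m_k` be positive integers
with `m₁ + ⋯ + m_k = C(n,u)`. Then the family of all `u`-element subsets of an
`n`-element set `Ω` can be partitioned into `k` pairwise disjoint sub-families
`H₁, …, H_k` with `|Hᵢ| = mᵢ`, such that for every `i` and every vertex `ω ∈ Ω`
the degree `d_{Hᵢ}(ω)` lies between `⌊u·mᵢ/n⌋` and `⌈u·mᵢ/n⌉`. -/
theorem baranyai (Ω : Type*) [Fintype Ω] [DecidableEq Ω] (n u k : ℕ)
    (hΩ : Fintype.card Ω = n) (hun : u ≤ n) (hu : 2 ≤ u)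
    (m : Fin k → ℕ) (hm : ∀ i, 0 < m i) (hsum : ∑ i, m i = n.choose u) :
    ∃ H : Fin k → Finset (Finset Ω),
      (∀ i j, i ≠ j → Disjoint (H i) (H j)) ∧
      (Finset.univ.biUnion H = Finset.powersetCard u (Finset.univ : Finset Ω)) ∧
      (∀ i, (H i).card = m i) ∧
      (∀ i : Fin k, ∀ ω : Ω,
        ⌊(u * m i : ℚ) / (n : ℚ)⌋ ≤ (((H i).filter (fun E => ω ∈ E)).card : ℤ) ∧
        (((H i).filter (fun E => ω ∈ E)).card : ℤ) ≤ ⌈(u * m i : ℚ) / (n : ℚ)⌉) := by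
  classical
  have hn0 : 0 < n := by omega
  have hcardP : (Finset.powersetCard u (Finset.univ : Finset Ω)).card = n.choose u := by
    rw [Finset.card_powersetCard, Finset.card_univ, hΩ]
  obtain ⟨H₀, hd₀, hu₀, hc₀⟩ := Baranyai.exists_partition k m
    (Finset.powersetCard u (Finset.univ : Finset Ω)) (hsum.trans hcardP.symm)
  have hV₀ : Baranyai.Valid u m H₀ := ⟨hd₀, hu₀, hc₀⟩
  obtain ⟨H, hV, hbal⟩ := Baranyai.exists_balanced (Baranyai.Phi H₀) H₀ hV₀ le_rfl
  refine ⟨H, hV.1, hV.2.1, hV.2.2, ?_⟩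
  intro i ω
  have hcardE : ∀ E ∈ H i, E.card = u := by
    intro E hE
    have hmem : E ∈ Finset.univ.biUnion H :=
      Finset.mem_biUnion.mpr ⟨i, Finset.mem_univ i, hE⟩
    rw [hV.2.1, Finset.mem_powersetCard] at hmem
    exact hmem.2
  have hbounds := Baranyai.balanced_bounds hΩ hn0 (H i) hcardE (hbal i) ω
  rw [hV.2.2 i] at hbounds
  exact hbounds
end

section
/- Let ρ > 1 be an odd integer, let u be a positive integer, and set n = ρu + 1. Fix an n-element set Ω and an element ω_i ∈ Ω. Then the family of all u-element subsets of Ω ∖ {ω_i} can be partitioned into k = C(n−2, u−1) pairwise disjoint classes T_{i1}, …, T_{ik}, each consisting of exactly ρ = (n−1)/u subsets, such that each class T_{ij} is a partition of Ω ∖ {ω_i}, and consequently for every j ∈ [k] the sum over 𝔽₂ of the vectors { χ_{Ω∖S} : S ∈ T_{ij} } in 𝔽₂^Ω equals the unit vector e_{ω_i}. -/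
open Finset

namespace BaranyaiAux

lemma kr_mul (ρ u : ℕ) (hρ : 0 < ρ) (hu : 0 < u) :
    (ρ * u - 1).choose (u - 1) * ρ = (ρ * u).choose u := by
  have hm : 0 < ρ * u := Nat.mul_pos hρ hu
  have h := Nat.add_one_mul_choose_eq (ρ*u - 1) (u - 1)
  rw [Nat.sub_add_cancel hm, Nat.sub_add_cancel hu] at h
  have h2 : ((ρ * u - 1).choose (u - 1) * ρ) * u = (ρ * u).choose u * u := by
    calc ((ρ * u - 1).choose (u - 1) * ρ) * u = ρ * u * (ρ*u-1).choose (u-1) := by ring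
    _ = (ρ * u).choose u * u := h
  exact Nat.eq_of_mul_eq_mul_right hu h2

/-- Vandermonde over subsets of a set. -/
lemma vander {α : Type*} (w a : ℕ) (V : Finset α) :
    ∑ S ∈ V.powerset.filter (fun S => S.card ≤ w), a.choose (w - S.card)
      = (V.card + a).choose w := by
  rw [Nat.add_choose_eq, Finset.Nat.sum_antidiagonal_eq_sum_range_succ_mk]
  rw [← Finset.sum_fiberwise_of_maps_to (g := fun S : Finset α => S.card)
      (t := Finset.range (w+1)) (by
        intro S hS
        simp only [mem_filter] at hS
        simpa using Nat.lt_succ_of_le hS.2)]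
  refine Finset.sum_congr rfl ?_
  intro s hs
  simp only [Finset.mem_range, Nat.lt_succ_iff] at hs
  have : (V.powerset.filter (fun S => S.card ≤ w)).filter (fun S => S.card = s)
      = V.powersetCard s := by
    ext S
    simp only [mem_filter, mem_powerset, mem_powersetCard]
    constructor
    · rintro ⟨⟨h1, _⟩, h3⟩; exact ⟨h1, h3⟩
    · rintro ⟨h1, h2⟩; exact ⟨⟨h1, h2 ▸ hs⟩, h2⟩
  rw [Finset.sum_congr this (fun S hS => by
    rw [(Finset.mem_powersetCard.mp hS).2]), Finset.sum_const, card_powersetCard]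
  ring


theorem exists_A {α : Type*} [DecidableEq α] (ρ u : ℕ) (hρ : 0 < ρ) (hu : 0 < u) (V : Finset α) :
    V.card ≤ ρ * u →
    ∃ A : Fin ((ρ*u - 1).choose (u-1)) → Fin ρ → Finset α,
      (∀ j t, A j t ⊆ V) ∧
      (∀ j, ∀ t t', t ≠ t' → Disjoint (A j t) (A j t')) ∧
      (∀ j, ∀ x ∈ V, ∃ t, x ∈ A j t) ∧
      (∀ S : Finset α, S ⊆ V →
        (Finset.univ.filter
            (fun p : Fin ((ρ*u-1).choose (u-1)) × Fin ρ => A p.1 p.2 = S)).card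
          = if S.card ≤ u then (ρ*u - V.card).choose (u - S.card) else 0) := by
  induction V using Finset.induction_on with
  | empty =>
      intro _
      refine ⟨fun _ _ => ∅, fun _ _ => le_refl _, fun _ _ _ _ => disjoint_bot_left,
        fun _ x hx => absurd hx (notMem_empty x), ?_⟩
      intro S hS
      rw [Finset.subset_empty.mp hS]
      simp only [Finset.card_empty, Nat.sub_zero, Nat.zero_le, if_true, Finset.filter_true]
      rw [Finset.card_univ, Fintype.card_prod, Fintype.card_fin, Fintype.card_fin]
      exact kr_mul ρ u hρ hu
  | @insert a V ha ih =>
      intro hVc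
      have hins : (insert a V).card = V.card + 1 := Finset.card_insert_of_notMem ha
      have hl : V.card < ρ * u := by omega
      set m := ρ * u with hm
      set k := (ρ * u - 1).choose (u - 1) with hk
      set l := V.card with hldef
      obtain ⟨A, hsub, hdisj, hcov, hcnt⟩ := ih (le_of_lt hl)
      have hslot_le : ∀ (j : Fin k) (t : Fin ρ), (A j t).card ≤ u := by
        intro j t
        by_contra hgt
        have h1 := hcnt (A j t) (hsub j t)
        rw [if_neg (by omega)] at h1
        have h2 : (j, t) ∈ Finset.univ.filter
            (fun p : Fin k × Fin ρ => A p.1 p.2 = A j t) := by simp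
        have := Finset.card_pos.mpr ⟨_, h2⟩
        omega
      have hsum : ∀ j : Fin k, ∑ t : Fin ρ, (A j t).card = l := by
        intro j
        have hun : Finset.univ.biUnion (A j) = V := by
          apply Finset.Subset.antisymm
          · intro x hx
            simp only [Finset.mem_biUnion] at hx
            obtain ⟨t, _, ht⟩ := hx
            exact hsub j t ht
          · intro x hx
            obtain ⟨t, ht⟩ := hcov j x hx
            exact Finset.mem_biUnion.mpr ⟨t, Finset.mem_univ t, ht⟩
        calc ∑ t : Fin ρ, (A j t).card = (Finset.univ.biUnion (A j)).card :=
              (Finset.card_biUnion (fun t _ t' _ htt => hdisj j t t' htt)).symm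
        _ = l := by rw [hun]
      have hgap : ∀ j : Fin k, ∑ t : Fin ρ, (u - (A j t).card) = m - l := by
        intro j
        have h1 : (∑ t : Fin ρ, (u - (A j t).card)) + (∑ t : Fin ρ, (A j t).card)
            = ρ * u := by
          rw [← Finset.sum_add_distrib]
          rw [Finset.sum_congr rfl (fun t _ => Nat.sub_add_cancel (hslot_le j t))]
          simp [Finset.sum_const, Finset.card_univ, mul_comm]
        rw [hsum j] at h1
        omega
      set q : Finset α → ℕ := fun S => (m - l - 1).choose (u - 1 - S.card) with hq
      set B : Finset (Finset α) := V.powerset.filter (fun S => S.card < u) with hB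
      have hsumqB : ∑ S ∈ B, q S = k := by
        have h1 : B = V.powerset.filter (fun S => S.card ≤ u - 1) := by
          apply Finset.filter_congr; intro S _
          constructor <;> (intro h; omega)
        rw [h1, hq, vander (u-1) (m - l - 1) V]
        rw [hk, hm]
        congr 1
        omega
      set tgt : Fin k → Finset (Finset α × ℕ) := fun j =>
        (B.filter (fun S => ∃ t, A j t = S)).biUnion
          (fun S => {S} ×ˢ Finset.range (q S)) with htgt
      have hcard_biUnion : ∀ W : Finset (Fin k),
          (W.biUnion tgt).card
            = ∑ S ∈ W.biUnion (fun j => B.filter (fun S => ∃ t, A j t = S)), q S := by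
        intro W
        have h1 : W.biUnion tgt
            = (W.biUnion (fun j => B.filter (fun S => ∃ t, A j t = S))).biUnion
                (fun S => {S} ×ˢ Finset.range (q S)) := by
          ext p
          simp only [htgt, Finset.mem_biUnion]
          constructor
          · rintro ⟨j, hj, S, hS, hp⟩; exact ⟨S, ⟨j, hj, hS⟩, hp⟩
          · rintro ⟨S, ⟨j, hj, hS⟩, hp⟩; exact ⟨j, hj, S, hS, hp⟩
        rw [h1, Finset.card_biUnion]
        · refine Finset.sum_congr rfl fun S _ => ?_
          rw [Finset.singleton_product, Finset.card_map, Finset.card_range]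
        · intro S _ S' _ hne
          simp only [Finset.disjoint_left]
          rintro p hp hp'
          simp only [Finset.mem_product, Finset.mem_singleton] at hp hp'
          exact hne (hp.1 ▸ hp'.1 ▸ rfl)
      have hmlpos : 0 < m - l := by omega
      have hhall : ∀ W : Finset (Fin k), W.card ≤ (W.biUnion tgt).card := by
        intro W
        rw [hcard_biUnion W]
        set PW := W.biUnion (fun j => B.filter (fun S => ∃ t, A j t = S)) with hPW
        have key : W.card * (m - l) ≤ (∑ S ∈ PW, q S) * (m - l) := by
          have lhs1 : W.card * (m - l) = ∑ j ∈ W, ∑ t : Fin ρ, (u - (A j t).card) := by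
            rw [Finset.sum_congr rfl (fun j _ => hgap j), Finset.sum_const, smul_eq_mul]
          have lhs2 : ∑ j ∈ W, ∑ t : Fin ρ, (u - (A j t).card)
              = ∑ p ∈ W ×ˢ (Finset.univ : Finset (Fin ρ)), (u - (A p.1 p.2).card) := by
            rw [Finset.sum_product]
          have lhs3 : ∑ p ∈ W ×ˢ (Finset.univ : Finset (Fin ρ)), (u - (A p.1 p.2).card)
              = ∑ p ∈ (W ×ˢ (Finset.univ : Finset (Fin ρ))).filter
                  (fun p => (A p.1 p.2).card < u), (u - (A p.1 p.2).card) := by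
            symm
            apply Finset.sum_filter_of_ne
            intro p _ hne
            omega
          have hmaps : ∀ p ∈ (W ×ˢ (Finset.univ : Finset (Fin ρ))).filter
              (fun p => (A p.1 p.2).card < u), A p.1 p.2 ∈ PW := by
            intro p hp
            simp only [Finset.mem_filter, Finset.mem_product] at hp
            refine Finset.mem_biUnion.mpr ⟨p.1, hp.1.1, ?_⟩
            simp only [hB, Finset.mem_filter, Finset.mem_powerset]
            exact ⟨⟨hsub _ _, hp.2⟩, p.2, rfl⟩
          have lhs4 : ∑ p ∈ (W ×ˢ (Finset.univ : Finset (Fin ρ))).filter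
                  (fun p => (A p.1 p.2).card < u), (u - (A p.1 p.2).card)
              = ∑ S ∈ PW, ∑ p ∈ ((W ×ˢ (Finset.univ : Finset (Fin ρ))).filter
                  (fun p => (A p.1 p.2).card < u)).filter (fun p => A p.1 p.2 = S),
                  (u - (A p.1 p.2).card) :=
            (Finset.sum_fiberwise_of_maps_to hmaps _).symm
          have hinner : ∀ S ∈ PW, ∑ p ∈ ((W ×ˢ (Finset.univ : Finset (Fin ρ))).filter
                  (fun p => (A p.1 p.2).card < u)).filter (fun p => A p.1 p.2 = S),
                  (u - (A p.1 p.2).card) ≤ q S * (m - l) := by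
            intro S hSPW
            have hSB : S ∈ B := by
              rw [hPW] at hSPW
              obtain ⟨j, _, hj⟩ := Finset.mem_biUnion.mp hSPW
              exact (Finset.mem_filter.mp hj).1
            have hSV : S ⊆ V := Finset.mem_powerset.mp (Finset.mem_filter.mp hSB).1
            have hSu : S.card < u := (Finset.mem_filter.mp hSB).2
            have hterm : ∀ p ∈ ((W ×ˢ (Finset.univ : Finset (Fin ρ))).filter
                  (fun p => (A p.1 p.2).card < u)).filter (fun p => A p.1 p.2 = S),
                  (u - (A p.1 p.2).card) = u - S.card := by
              intro p hp
              rw [(Finset.mem_filter.mp hp).2]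
            rw [Finset.sum_congr rfl hterm, Finset.sum_const, smul_eq_mul]
            have hfib : (((W ×ˢ (Finset.univ : Finset (Fin ρ))).filter
                  (fun p => (A p.1 p.2).card < u)).filter (fun p => A p.1 p.2 = S)).card
                ≤ (m - l).choose (u - S.card) := by
              have hsubf : (((W ×ˢ (Finset.univ : Finset (Fin ρ))).filter
                  (fun p => (A p.1 p.2).card < u)).filter (fun p => A p.1 p.2 = S))
                  ⊆ Finset.univ.filter (fun p : Fin k × Fin ρ => A p.1 p.2 = S) := by
                intro p hp
                simp only [Finset.mem_filter] at hp ⊢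
                exact ⟨Finset.mem_univ _, hp.2⟩
              have := Finset.card_le_card hsubf
              rw [hcnt S hSV, if_pos (le_of_lt hSu)] at this
              exact this
            have hident : (u - S.card) * (m - l).choose (u - S.card) = (m - l) * q S := by
              have h0 := Nat.add_one_mul_choose_eq (m - l - 1) (u - S.card - 1)
              rw [show m - l - 1 + 1 = m - l by omega, show u - S.card - 1 + 1 = u - S.card by omega] at h0
              have hqS : q S = (m - l - 1).choose (u - S.card - 1) := by
                simp only [hq]
                congr 1
                omega
              calc (u - S.card) * (m - l).choose (u - S.card)
                  = (m - l).choose (u - S.card) * (u - S.card) := mul_comm _ _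
                _ = (m - l) * q S := by rw [hqS]; exact h0.symm
            calc ((((W ×ˢ (Finset.univ : Finset (Fin ρ))).filter
                  (fun p => (A p.1 p.2).card < u)).filter (fun p => A p.1 p.2 = S)).card)
                  * (u - S.card)
                ≤ (m - l).choose (u - S.card) * (u - S.card) :=
                  Nat.mul_le_mul_right _ hfib
              _ = q S * (m - l) := by rw [mul_comm]; rw [hident]; ring
            -- note order: sum_const gives card • (u - S.card) = card * (u - S.card)
          calc W.card * (m - l) = ∑ S ∈ PW, ∑ p ∈ ((W ×ˢ (Finset.univ : Finset (Fin ρ))).filter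
                  (fun p => (A p.1 p.2).card < u)).filter (fun p => A p.1 p.2 = S),
                  (u - (A p.1 p.2).card) := by rw [lhs1, lhs2, lhs3, lhs4]
            _ ≤ ∑ S ∈ PW, q S * (m - l) := Finset.sum_le_sum hinner
            _ = (∑ S ∈ PW, q S) * (m - l) := by rw [Finset.sum_mul]
        exact Nat.le_of_mul_le_mul_right key hmlpos
      obtain ⟨f, hfinj, hft⟩ :=
        (Finset.all_card_le_biUnion_card_iff_exists_injective tgt).mp hhall
      have hfmem : ∀ j, (f j).1 ∈ B ∧ (∃ t, A j t = (f j).1) ∧ (f j).2 < q ((f j).1) := by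
        intro j
        have h := hft j
        simp only [htgt, Finset.mem_biUnion, Finset.mem_filter, Finset.mem_product,
          Finset.mem_singleton, Finset.mem_range] at h
        obtain ⟨S, ⟨hSB, hSp⟩, h1, h2⟩ := h
        subst h1
        exact ⟨hSB, hSp, h2⟩
      set w : Finset α → ℕ :=
        fun S => (Finset.univ.filter (fun j : Fin k => (f j).1 = S)).card with hw
      have hwle : ∀ S, w S ≤ q S := by
        intro S
        rw [hw]
        have h1 : ∀ j ∈ Finset.univ.filter (fun j : Fin k => (f j).1 = S),
            (f j).2 ∈ Finset.range (q S) := by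
          intro j hj
          simp only [Finset.mem_filter] at hj
          rw [Finset.mem_range, ← hj.2]
          exact (hfmem j).2.2
        have h2 : Set.InjOn (fun j => (f j).2)
            (Finset.univ.filter (fun j : Fin k => (f j).1 = S)) := by
          intro j hj j' hj' he
          simp only [Finset.coe_filter, Set.mem_setOf_eq] at hj hj'
          exact hfinj (Prod.ext (hj.2.trans hj'.2.symm) he)
        simpa using Finset.card_le_card_of_injOn _ h1 h2
      have hwsum : ∑ S ∈ B, w S = k := by
        have h := Finset.card_eq_sum_card_fiberwise
          (f := fun j : Fin k => (f j).1) (s := Finset.univ) (t := B)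
          (fun j _ => (hfmem j).1)
        rw [Finset.card_univ, Fintype.card_fin] at h
        exact h.symm
      have hwq : ∀ S ∈ B, w S = q S := by
        intro S hS
        exact (Finset.sum_eq_sum_iff_of_le (fun S _ => hwle S)).mp
          (hwsum.trans hsumqB.symm) S hS
      have hwzero : ∀ S, S ∉ B → w S = 0 := by
        intro S hS
        rw [hw, Finset.card_eq_zero, Finset.filter_eq_empty_iff]
        intro j _
        intro h
        exact hS (h ▸ (hfmem j).1)
      choose σ hσ using fun j => (hfmem j).2.1
      have hpairs : ∀ S' : Finset α, (Finset.univ.filter (fun p : Fin k × Fin ρ =>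
          p.2 = σ p.1 ∧ (f p.1).1 = S')).card = w S' := by
        intro S'
        rw [hw]
        apply Finset.card_bij (fun p _ => p.1)
        · intro p hp
          simp only [Finset.mem_filter] at hp ⊢
          exact ⟨Finset.mem_univ _, hp.2.2⟩
        · intro p hp p' hp' hpp
          simp only [Finset.mem_filter] at hp hp'
          exact Prod.ext hpp (by rw [hp.2.1, hp'.2.1, hpp])
        · intro j hj
          simp only [Finset.mem_filter] at hj
          exact ⟨(j, σ j), by simp [hj.2], rfl⟩
      refine ⟨fun j t => if t = σ j then insert a (A j t) else A j t, ?_, ?_, ?_, ?_⟩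
      · intro j t
        dsimp only
        split
        · exact Finset.insert_subset_insert a (hsub j t)
        · exact (hsub j t).trans (Finset.subset_insert a V)
      · intro j t t' hne
        have hna : ∀ t'', a ∉ A j t'' := fun t'' h => ha (hsub j t'' h)
        dsimp only
        split <;> split
        · rename_i h1 h2
          exact absurd (h1.trans h2.symm) hne
        · exact Finset.disjoint_insert_left.mpr ⟨hna t', hdisj j t t' hne⟩
        · exact Finset.disjoint_insert_right.mpr ⟨hna t, hdisj j t t' hne⟩
        · exact hdisj j t t' hne
      · intro j x hx
        rcases Finset.mem_insert.mp hx with rfl | hxV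
        · exact ⟨σ j, by simp⟩
        · obtain ⟨t, ht⟩ := hcov j x hxV
          refine ⟨t, ?_⟩
          dsimp only
          split
          · exact Finset.mem_insert_of_mem ht
          · exact ht
      · intro S hS
        rw [hins]
        simp only
        by_cases haS : a ∈ S
        · -- a ∈ S : new count is w (S.erase a)
          have hSV : S.erase a ⊆ V := by
            intro x hx
            rcases Finset.mem_insert.mp (hS (Finset.mem_of_mem_erase hx)) with rfl | h
            · exact absurd rfl (Finset.ne_of_mem_erase hx)
            · exact h
          have hcard_erase : (S.erase a).card = S.card - 1 := Finset.card_erase_of_mem haS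
          have hSpos : 0 < S.card := Finset.card_pos.mpr ⟨a, haS⟩
          have hiff : ∀ p : Fin k × Fin ρ,
              ((if p.2 = σ p.1 then insert a (A p.1 p.2) else A p.1 p.2) = S)
                ↔ (p.2 = σ p.1 ∧ (f p.1).1 = S.erase a) := by
            intro p
            by_cases h : p.2 = σ p.1
            · simp only [h, if_true, true_and]
              rw [hσ p.1]
              have hna : a ∉ (f p.1).1 := by
                rw [← hσ p.1]
                exact fun hmem => ha (hsub _ _ hmem)
              constructor
              · intro he
                rw [← he, Finset.erase_insert hna]
              · intro he
                rw [he, Finset.insert_erase haS]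
            · simp only [h, if_false, false_and, iff_false]
              intro he
              exact ha (hsub p.1 p.2 (he ▸ haS))
          rw [Finset.filter_congr (fun p _ => hiff p), hpairs (S.erase a)]
          by_cases hsu : S.card ≤ u
          · rw [if_pos hsu]
            have hEB : S.erase a ∈ B := by
              rw [hB]
              simp only [Finset.mem_filter, Finset.mem_powerset]
              exact ⟨hSV, by omega⟩
            rw [hwq _ hEB]
            simp only [hq]
            congr 1 <;> omega
          · rw [if_neg hsu]
            apply hwzero
            rw [hB]
            simp only [Finset.mem_filter, Finset.mem_powerset]
            intro hcon
            omega
        · -- a ∉ S : count decreases by w S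
          have hSV : S ⊆ V := by
            intro x hx
            rcases Finset.mem_insert.mp (hS hx) with rfl | h
            · exact absurd hx haS
            · exact h
          set F := Finset.univ.filter (fun p : Fin k × Fin ρ => A p.1 p.2 = S) with hF
          have e1 : F.filter (fun p => p.2 = σ p.1)
              = Finset.univ.filter (fun p : Fin k × Fin ρ =>
                  p.2 = σ p.1 ∧ (f p.1).1 = S) := by
            ext p
            simp only [hF, Finset.filter_filter, Finset.mem_filter, Finset.mem_univ, true_and]
            constructor
            · rintro ⟨hA, hpσ⟩
              exact ⟨hpσ, by rw [← hσ p.1, ← hpσ]; exact hA⟩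
            · rintro ⟨hpσ, hfS⟩
              exact ⟨by rw [hpσ, hσ p.1]; exact hfS, hpσ⟩
          have e2 : Finset.univ.filter (fun p : Fin k × Fin ρ =>
              (if p.2 = σ p.1 then insert a (A p.1 p.2) else A p.1 p.2) = S)
              = F.filter (fun p => ¬ p.2 = σ p.1) := by
            ext p
            simp only [hF, Finset.filter_filter, Finset.mem_filter, Finset.mem_univ, true_and]
            by_cases h : p.2 = σ p.1
            · simp only [h, if_true, eq_self_iff_true, not_true, and_false, iff_false]
              intro he
              exact haS (he ▸ Finset.mem_insert_self a (A p.1 (σ p.1)))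
            · simp only [h, if_false, not_false_iff, and_true]
          have hsplit := Finset.card_filter_add_card_filter_not
            (s := F) (p := fun p : Fin k × Fin ρ => p.2 = σ p.1)
          rw [e1, hpairs S] at hsplit
          have hFcard : F.card = if S.card ≤ u then (m - l).choose (u - S.card) else 0 :=
            hcnt S hSV
          rw [e2]
          -- now: (F.filter (¬ p.2 = σ p.1)).card = w S subtracted
          rcases lt_trichotomy S.card u with hlt | heq | hgt
          · rw [if_pos (by omega : S.card ≤ u)]
            have hSB : S ∈ B := by
              rw [hB]
              simp only [Finset.mem_filter, Finset.mem_powerset]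
              exact ⟨hSV, hlt⟩
            rw [if_pos (le_of_lt hlt)] at hFcard
            have hwS : w S = (m - l - 1).choose (u - S.card - 1) := by
              rw [hwq _ hSB]
              simp only [hq]
              congr 1
              omega
            have hpascal : (m - l).choose (u - S.card)
                = (m - l - 1).choose (u - S.card - 1) + (m - l - 1).choose (u - S.card) := by
              rw [show m - l = (m - l - 1) + 1 by omega, show u - S.card = (u - S.card - 1) + 1 by omega]
              rw [Nat.choose_succ_succ]
              congr 2 <;> omega
            rw [show m - (l + 1) = m - l - 1 by omega]
            omega
          · rw [if_pos (le_of_eq heq)]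
            have hwS : w S = 0 := by
              apply hwzero
              rw [hB]
              simp only [Finset.mem_filter, Finset.mem_powerset]
              intro hcon
              omega
            rw [if_pos (le_of_eq heq)] at hFcard
            rw [show u - S.card = 0 by omega] at hFcard ⊢
            rw [Nat.choose_zero_right] at hFcard ⊢
            omega
          · rw [if_neg (by omega : ¬ S.card ≤ u)]
            rw [if_neg (by omega : ¬ S.card ≤ u)] at hFcard
            omega



end BaranyaiAux

open BaranyaiAux

/-- Let `ρ > 1` be an odd integer, `u` a positive integer, `n = ρu + 1`, `Ω` an
`n`-element set and `ωᵢ ∈ Ω`. Then the family of all `u`-element subsets of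
`Ω ∖ {ωᵢ}` can be partitioned into `k = C(n−2, u−1)` pairwise disjoint classes
`T_{i1}, …, T_{ik}`, each consisting of exactly `ρ = (n−1)/u` subsets, such that
each class is a partition of `Ω ∖ {ωᵢ}`, and consequently for every `j ∈ [k]`
the sum over `𝔽₂` of the vectors `{χ_{Ω∖S} : S ∈ T_{ij}}` in `𝔽₂^Ω` equals the
unit vector `e_{ωᵢ}`. -/
theorem partition_of_punctured_subsets (Ω : Type*) [Fintype Ω] [DecidableEq Ω]
    (ρ u n : ℕ) (hρ : 1 < ρ) (hρodd : Odd ρ) (hu : 0 < u) (hn : n = ρ * u + 1)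
    (hΩ : Fintype.card Ω = n) (ωi : Ω) :
    ∃ T : Fin ((n - 2).choose (u - 1)) → Finset (Finset Ω),
      (∀ j j', j ≠ j' → Disjoint (T j) (T j')) ∧
      (Finset.univ.biUnion T =
        Finset.powersetCard u ((Finset.univ : Finset Ω).erase ωi)) ∧
      (∀ j, (T j).card = ρ) ∧
      (∀ j, ∀ a : Ω, a ≠ ωi → ((T j).filter (fun S => a ∈ S)).card = 1) ∧
      (∀ j, (fun a : Ω => ∑ S ∈ T j, if a ∈ S then (0 : ZMod 2) else 1) =
        (fun a : Ω => if a = ωi then (1 : ZMod 2) else 0)) := by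
  subst hn
  rw [show ρ * u + 1 - 2 = ρ * u - 1 from by omega]
  set V : Finset Ω := (Finset.univ : Finset Ω).erase ωi with hVdef
  have hVcard : V.card = ρ * u := by
    rw [hVdef, Finset.card_erase_of_mem (Finset.mem_univ ωi), Finset.card_univ, hΩ]
    omega
  obtain ⟨A, hsub, hdisj, hcov, hcnt⟩ :=
    exists_A (α := Ω) ρ u (by omega) hu V (le_of_eq hVcard)
  rw [hVcard] at hcnt
  simp only [Nat.sub_self] at hcnt
  -- every slot has size exactly u
  have hslot : ∀ (j : Fin ((ρ * u - 1).choose (u - 1))) (t : Fin ρ), (A j t).card = u := by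
    intro j t
    have h1 := hcnt (A j t) (hsub j t)
    have h2 : (j, t) ∈ Finset.univ.filter
        (fun p : Fin ((ρ * u - 1).choose (u - 1)) × Fin ρ => A p.1 p.2 = A j t) := by simp
    have h3 := Finset.card_pos.mpr ⟨_, h2⟩
    by_contra hne
    rcases Nat.lt_or_ge (A j t).card u with hlt | hge
    · rw [if_pos (le_of_lt hlt)] at h1
      have h4 : Nat.choose 0 (u - (A j t).card) = 0 :=
        Nat.choose_eq_zero_of_lt (by omega)
      omega
    · rw [if_neg (by omega)] at h1
      omega
  have hnonempty : ∀ (j : Fin ((ρ * u - 1).choose (u - 1))) (t : Fin ρ), (A j t).Nonempty := by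
    intro j t
    rw [← Finset.card_pos, hslot]
    exact hu
  have hAinj : ∀ j : Fin ((ρ * u - 1).choose (u - 1)), Function.Injective (A j) := by
    intro j t t' he
    by_contra hne
    obtain ⟨x, hx⟩ := hnonempty j t
    exact Finset.disjoint_left.mp (hdisj j t t' hne) hx (he ▸ hx)
  have hcnt1 : ∀ S : Finset Ω, S ⊆ V → S.card = u →
      (Finset.univ.filter (fun p : Fin ((ρ * u - 1).choose (u - 1)) × Fin ρ => A p.1 p.2 = S)).card = 1 := by
    intro S h1 h2
    rw [hcnt S h1, if_pos (le_of_eq h2), h2, Nat.sub_self, Nat.choose_zero_right]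
  refine ⟨fun j => Finset.image (A j) Finset.univ, ?_, ?_, ?_, ?_, ?_⟩
  · intro j j' hne
    rw [Finset.disjoint_left]
    intro S hS hS'
    simp only [Finset.mem_image, Finset.mem_univ, true_and] at hS hS'
    obtain ⟨t, ht⟩ := hS
    obtain ⟨t', ht'⟩ := hS'
    have h2 : (j, t) ∈ Finset.univ.filter
        (fun p : Fin ((ρ * u - 1).choose (u - 1)) × Fin ρ => A p.1 p.2 = S) := by simp [ht]
    have h2' : (j', t') ∈ Finset.univ.filter
        (fun p : Fin ((ρ * u - 1).choose (u - 1)) × Fin ρ => A p.1 p.2 = S) := by simp [ht']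
    have h3 := hcnt1 S (ht ▸ hsub j t) (ht ▸ hslot j t)
    have h4 : (j, t) = (j', t') := by
      have := Finset.card_le_one.mp (le_of_eq h3) _ h2 _ h2'
      exact this
    exact hne (congrArg Prod.fst h4)
  · ext S
    simp only [Finset.mem_biUnion, Finset.mem_univ, true_and, Finset.mem_image,
      Finset.mem_powersetCard]
    constructor
    · rintro ⟨j, t, _, rfl⟩
      exact ⟨hsub j t, hslot j t⟩
    · rintro ⟨h1, h2⟩
      have h3 := hcnt1 S h1 h2
      have h4 : (Finset.univ.filter (fun p : Fin ((ρ * u - 1).choose (u - 1)) × Fin ρ => A p.1 p.2 = S)).Nonempty := by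
        rw [← Finset.card_pos, h3]; omega
      obtain ⟨p, hp⟩ := h4
      simp only [Finset.mem_filter] at hp
      exact ⟨p.1, p.2, hp.2⟩
  · intro j
    rw [Finset.card_image_of_injective _ (hAinj j), Finset.card_univ, Fintype.card_fin]
  · intro j a hane
    have haV : a ∈ V := by simp [hVdef, hane]
    obtain ⟨t, ht⟩ := hcov j a haV
    rw [Finset.card_eq_one]
    refine ⟨A j t, ?_⟩
    ext S
    simp only [Finset.mem_filter, Finset.mem_image, Finset.mem_univ, true_and,
      Finset.mem_singleton]
    constructor
    · rintro ⟨⟨t', rfl⟩, hmem⟩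
      by_contra hne
      have htt : t' ≠ t := fun h => hne (by rw [h])
      exact Finset.disjoint_left.mp (hdisj j t' t htt) hmem ht
    · rintro rfl
      exact ⟨⟨t, rfl⟩, ht⟩
  · intro j
    funext b
    have hcard : (Finset.image (A j) Finset.univ).card = ρ := by
      rw [Finset.card_image_of_injective _ (hAinj j), Finset.card_univ, Fintype.card_fin]
    rw [Finset.sum_ite, Finset.sum_const_zero, zero_add, Finset.sum_const, nsmul_eq_mul,
      mul_one]
    by_cases hb : b = ωi
    · rw [if_pos hb]
      have hfilt : (Finset.image (A j) Finset.univ).filter (fun S => b ∈ S)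
          = ∅ := by
        rw [Finset.filter_eq_empty_iff]
        rintro S hS hbS
        simp only [Finset.mem_image, Finset.mem_univ, true_and] at hS
        obtain ⟨t, rfl⟩ := hS
        have := hsub j t hbS
        rw [hVdef, hb] at this
        exact (Finset.notMem_erase ωi _) this
      have h5 := Finset.card_filter_add_card_filter_not
        (s := Finset.image (A j) Finset.univ) (p := fun S => b ∈ S)
      rw [hfilt, Finset.card_empty, zero_add, hcard] at h5
      rw [h5]
      obtain ⟨c, hc⟩ := hρodd
      rw [hc]
      push_cast
      ring_nf
      rw [show ((2 : ZMod 2) = 0) from rfl]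
      ring
    · rw [if_neg hb]
      have h4 : ((Finset.image (A j) Finset.univ).filter (fun S => b ∈ S)).card = 1 := by
      -- reuse previous part
        have haV : b ∈ V := by simp [hVdef, hb]
        obtain ⟨t, ht⟩ := hcov j b haV
        rw [Finset.card_eq_one]
        refine ⟨A j t, ?_⟩
        ext S
        simp only [Finset.mem_filter, Finset.mem_image, Finset.mem_univ, true_and,
          Finset.mem_singleton]
        constructor
        · rintro ⟨⟨t', rfl⟩, hmem⟩
          by_contra hne
          have htt : t' ≠ t := fun h => hne (by rw [h])
          exact Finset.disjoint_left.mp (hdisj j t' t htt) hmem ht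
        · rintro rfl
          exact ⟨⟨t, rfl⟩, ht⟩
      have h5 := Finset.card_filter_add_card_filter_not
        (s := Finset.image (A j) Finset.univ) (p := fun S => b ∈ S)
      rw [h4, hcard] at h5
      have h6 : ((Finset.image (A j) Finset.univ).filter (fun S => ¬ b ∈ S)).card = ρ - 1 := by
        omega
      rw [h6]
      obtain ⟨c, hc⟩ := hρodd
      rw [show ρ - 1 = 2 * c by omega]
      push_cast
      rw [show ((2 : ZMod 2) = 0) from rfl]
      ring
end

section
/- Let ρ > 1 be an odd integer, u a positive integer, n = ρu + 1, and N = C(n,u). Let A be the n × N matrix over 𝔽₂ whose columns are the characteristic vectors of all u-element subsets of an n-element set Ω = {ω_1, …, ω_n}, and let G be the n × N matrix over 𝔽₂ with entries g_{ij} = 1 + a_{ij} (the coordinatewise complement of A). Then for every i ∈ [n]: the set T_i = { ℓ ∈ [N] : g_{iℓ} = 1 } consists exactly of the columns indexed by u-subsets of Ω ∖ {ω_i}, has cardinality C(n−1, u) = (1 − u/n)·N, and can be partitioned into k = C(n−2, u−1) pairwise disjoint sets T_{i1}, …, T_{ik}, each of cardinality ρ, such that for every j ∈ [k] the sum over 𝔽₂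 of the columns {G_ℓ : ℓ ∈ T_{ij}} equals the i-th unit vector e_i ∈ 𝔽₂^n. -/
open Finset

namespace BarAux

/-- The first `s` elements of `Fin m`. -/
def Ivs (m s : ℕ) : Finset (Fin m) := Finset.univ.filter (fun x => (x : ℕ) < s)

lemma mem_Ivs {m s : ℕ} {x : Fin m} : x ∈ Ivs m s ↔ (x : ℕ) < s := by
  simp [Ivs]

lemma Ivs_zero (m : ℕ) : Ivs m 0 = ∅ := by
  ext x; simp [mem_Ivs]

lemma Ivs_top (m : ℕ) : Ivs m m = univ := by
  ext x; simp [mem_Ivs, x.isLt]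

lemma Ivs_succ {m s : ℕ} (hs : s < m) :
    Ivs m (s + 1) = insert ⟨s, hs⟩ (Ivs m s) := by
  ext x
  simp only [mem_Ivs, mem_insert, Fin.ext_iff]
  omega

lemma not_mem_Ivs {m s : ℕ} (hs : s < m) : (⟨s, hs⟩ : Fin m) ∉ Ivs m s := by
  simp [mem_Ivs]

lemma card_Ivs {m s : ℕ} (h : s ≤ m) : (Ivs m s).card = s := by
  induction s with
  | zero => simp [Ivs_zero]
  | succ t ih =>
      rw [Ivs_succ h, card_insert_of_notMem (not_mem_Ivs h), ih (by omega)]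

end BarAux

namespace BarAux

lemma sum_range_bridge (f g : ℕ → ℕ) (a b : ℕ)
    (hf : ∀ i, b ≤ i → f i = 0) (hg : ∀ i, a ≤ i → g i = 0)
    (hfg : ∀ i, i < a → i < b → f i = g i) :
    ∑ i ∈ range a, f i = ∑ i ∈ range b, g i := by
  have h1 : ∑ i ∈ range a, f i = ∑ i ∈ range (min a b), f i := by
    refine (sum_subset (by simp) ?_).symm
    intro i hi hi'
    simp only [mem_range, lt_min_iff, not_and_or, not_lt] at hi hi'
    rcases hi' with h | h
    · omega
    · exact hf i h
  have h2 : ∑ i ∈ range b, g i = ∑ i ∈ range (min a b), g i := by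
    refine (sum_subset (by simp) ?_).symm
    intro i hi hi'
    simp only [mem_range, lt_min_iff, not_and_or, not_lt] at hi hi'
    rcases hi' with h | h
    · exact hg i h
    · omega
  rw [h1, h2]
  exact sum_congr rfl fun i hi => by
    simp only [mem_range, lt_min_iff] at hi; exact hfg i hi.1 hi.2

lemma vandermonde_range (p q c : ℕ) :
    (p + q).choose c = ∑ a ∈ range (c + 1), p.choose a * q.choose (c - a) := by
  rw [Nat.add_choose_eq, Finset.Nat.sum_antidiagonal_eq_sum_range_succ_mk]

/-- `k·ρ = C(m,u)` when `m = ρu`. -/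
lemma k_mul_rho {m u ρ : ℕ} (hu : 0 < u) (hρ : 0 < ρ) (hm : m = ρ * u) :
    (m - 1).choose (u - 1) * ρ = m.choose u := by
  have hm1 : 1 ≤ m := by nlinarith
  have h := Nat.add_one_mul_choose_eq (m - 1) (u - 1)
  rw [Nat.sub_add_cancel hm1, Nat.sub_add_cancel hu] at h
  have : (m - 1).choose (u - 1) * ρ * u = m.choose u * u := by
    calc (m - 1).choose (u - 1) * ρ * u = m * (m - 1).choose (u - 1) := by
          rw [hm]; ring
      _ = m.choose u * u := h
  exact Nat.eq_of_mul_eq_mul_right hu this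

lemma scale_choose {t c : ℕ} (ht : 0 < t) (hc : 0 < c) :
    t * ((t - 1).choose (c - 1)) = t.choose c * c := by
  have h := Nat.add_one_mul_choose_eq (t - 1) (c - 1)
  rwa [Nat.sub_add_cancel ht, Nat.sub_add_cancel hc] at h

end BarAux

namespace BarAux

lemma sum_d {m u s : ℕ} (hu : 0 < u) (hs : s < m) :
    ∑ A ∈ (Ivs m s).powerset.filter (fun A => A.card < u),
        (m - s - 1).choose (u - 1 - A.card) = (m - 1).choose (u - 1) := by
  rw [sum_filter]
  have hrw : ∀ A ∈ (Ivs m s).powerset,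
      (if A.card < u then (m - s - 1).choose (u - 1 - A.card) else 0) =
      (fun a => if a < u then (m - s - 1).choose (u - 1 - a) else 0) A.card := by
    intro A _; rfl
  rw [sum_congr rfl hrw, Finset.sum_powerset_apply_card (f := fun a => if a < u then (m - s - 1).choose (u - 1 - a) else 0) (x := Ivs m s), card_Ivs hs.le]
  have hv : (m - 1).choose (u - 1) =
      ∑ a ∈ range u, s.choose a * (m - s - 1).choose (u - 1 - a) := by
    have h1 : m - 1 = s + (m - s - 1) := by omega
    have h2 : u = u - 1 + 1 := by omega
    rw [h1, vandermonde_range, ← h2]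
  rw [hv]
  apply sum_range_bridge
  · intro i hi
    rw [if_neg (by omega), smul_zero]
  · intro i hi
    rw [Nat.choose_eq_zero_of_lt (by omega), zero_mul]
  · intro i h1 h2
    rw [if_pos h2, smul_eq_mul]

lemma sum_counts {m u s : ℕ} (hu : 0 < u) (hsm : s ≤ m) :
    ∑ A ∈ (Ivs m s).powerset.filter (fun A => 0 < A.card ∧ A.card ≤ u),
        (m - s).choose (u - A.card) + (m - s).choose u = m.choose u := by
  rw [sum_filter]
  have hrw : ∀ A ∈ (Ivs m s).powerset,
      (if 0 < A.card ∧ A.card ≤ u then (m - s).choose (u - A.card) else 0) =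
      (fun a => if 0 < a ∧ a ≤ u then (m - s).choose (u - a) else 0) A.card := by
    intro A _; rfl
  rw [sum_congr rfl hrw, Finset.sum_powerset_apply_card (f := fun a => if 0 < a ∧ a ≤ u then (m - s).choose (u - a) else 0) (x := Ivs m s), card_Ivs hsm]
  have hb : ∑ a ∈ range (s + 1),
        s.choose a • (if 0 < a ∧ a ≤ u then (m - s).choose (u - a) else 0) =
      ∑ a ∈ range (u + 1),
        (if 0 < a then s.choose a * (m - s).choose (u - a) else 0) := by
    apply sum_range_bridge
    · intro i hi
      rw [if_neg (by omega), smul_zero]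
    · intro i hi
      rcases Nat.eq_zero_or_pos i with h | h
      · rw [if_neg (by omega)]
      · rw [if_pos h, Nat.choose_eq_zero_of_lt (by omega), zero_mul]
    · intro i h1 h2
      rcases Nat.eq_zero_or_pos i with h | h
      · subst h; simp
      · rw [if_pos (by omega), if_pos h, smul_eq_mul]
  rw [hb]
  have hv : m.choose u = ∑ a ∈ range (u + 1), s.choose a * (m - s).choose (u - a) := by
    have h1 : m = s + (m - s) := by omega
    nth_rewrite 1 [h1]
    rw [vandermonde_range]
  rw [hv, Finset.sum_range_succ' (fun a => if 0 < a then s.choose a * (m - s).choose (u - a) else 0) u,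
    Finset.sum_range_succ' (fun a => s.choose a * (m - s).choose (u - a)) u]
  simp

end BarAux

namespace BarAux

/-- The inductive invariant for the Brouwer–Schrijver proof of Baranyai's theorem. -/
def good (m u ρ s : ℕ) (P : Fin ((m - 1).choose (u - 1)) → Finset (Finset (Fin m))) : Prop :=
  (∀ j, ∀ A ∈ P j, A.Nonempty ∧ A.card ≤ u ∧ A ⊆ Ivs m s) ∧
  (∀ j, ∀ A ∈ P j, ∀ B ∈ P j, A ≠ B → Disjoint A B) ∧
  (∀ j, (P j).biUnion id = Ivs m s) ∧
  (∀ j, (P j).card ≤ ρ) ∧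
  (∀ A : Finset (Fin m), A.Nonempty → A.card ≤ u → A ⊆ Ivs m s →
    (univ.filter (fun j => A ∈ P j)).card = (m - s).choose (u - A.card))

lemma good_zero (m u ρ : ℕ) : good m u ρ 0 (fun _ => ∅) := by
  refine ⟨by simp, by simp, by simp [Ivs_zero], by simp, ?_⟩
  intro A hA _ hsub
  rw [Ivs_zero, Finset.subset_empty] at hsub
  exact absurd hsub hA.ne_empty

lemma step {m u ρ s : ℕ} (hu : 0 < u) (hρ : 0 < ρ) (hm : m = ρ * u) (hs : s < m)
    (P : Fin ((m - 1).choose (u - 1)) → Finset (Finset (Fin m))) (hP : good m u ρ s P) :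
    ∃ P', good m u ρ (s + 1) P' := by
  classical
  obtain ⟨h1, h2, h3, h4, h5⟩ := hP
  have hms : 0 < m - s := by omega
  set x : Fin m := ⟨s, hs⟩ with hxdef
  set d : Finset (Fin m) → ℕ := fun A => (m - s - 1).choose (u - 1 - A.card) with hd
  set avail : Fin ((m - 1).choose (u - 1)) → Finset (Finset (Fin m)) := fun j =>
    (if (P j).card < ρ then {(∅ : Finset (Fin m))} else ∅) ∪
      (P j).filter (fun A => A.card < u) with havail
  set C : Finset (Finset (Fin m)) :=
    (Ivs m s).powerset.filter (fun A => A.card < u) with hC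
  set w : Fin ((m - 1).choose (u - 1)) → Finset (Fin m) → ℕ := fun j A =>
    if A = ∅ then (ρ - (P j).card) * u else u - A.card with hw
  have hPempty : ∀ j, (∅ : Finset (Fin m)) ∉ P j := by
    intro j h
    exact (h1 j ∅ h).1.ne_empty rfl
  have mem_avail : ∀ j A, A ∈ avail j ↔
      ((A = ∅ ∧ (P j).card < ρ) ∨ (A ∈ P j ∧ A.card < u)) := by
    intro j A
    by_cases h : (P j).card < ρ <;> simp [havail, h] <;> tauto
  have avail_sub_C : ∀ j, avail j ⊆ C := by
    intro j A hA
    rw [mem_avail] at hA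
    rw [hC, mem_filter, mem_powerset]
    rcases hA with ⟨rfl, -⟩ | ⟨hAP, hAu⟩
    · exact ⟨empty_subset _, by simpa using hu⟩
    · exact ⟨(h1 j A hAP).2.2, hAu⟩
  have hsumcard : ∀ j, ∑ A ∈ P j, A.card = s := by
    intro j
    have hcb : ((P j).biUnion id).card = ∑ A ∈ P j, A.card :=
      card_biUnion (fun A hA B hB hAB => h2 j A hA B hB hAB)
    rw [h3 j, card_Ivs hs.le] at hcb
    omega
  have hfiltersum : ∀ j, (∑ A ∈ (P j).filter (fun A => A.card < u), (u - A.card)) + s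
      = (P j).card * u := by
    intro j
    have he : ∑ A ∈ (P j).filter (fun A => A.card < u), (u - A.card)
        = ∑ A ∈ P j, (u - A.card) := by
      refine sum_subset (filter_subset _ _) ?_
      intro A hA hA'
      have := (h1 j A hA).2.1
      simp only [mem_filter, hA, true_and, not_lt] at hA'
      omega
    have he2 : ∑ A ∈ P j, (u - A.card) + ∑ A ∈ P j, A.card = ∑ A ∈ P j, u := by
      rw [← sum_add_distrib]
      exact sum_congr rfl fun A hA => by have := (h1 j A hA).2.1; omega
    rw [he, ← hsumcard j, he2, sum_const, smul_eq_mul]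
  have class_sum : ∀ j, (∑ A ∈ avail j, w j A) + s = m := by
    intro j
    have hdisj : Disjoint (if (P j).card < ρ then {(∅ : Finset (Fin m))} else ∅)
        ((P j).filter (fun A => A.card < u)) := by
      split
      · simp only [disjoint_left, mem_singleton, mem_filter]
        rintro a rfl ⟨h, -⟩
        exact hPempty j h
      · simp
    rw [havail, sum_union hdisj]
    have hwf : ∑ A ∈ (P j).filter (fun A => A.card < u), w j A
        = ∑ A ∈ (P j).filter (fun A => A.card < u), (u - A.card) := by
      refine sum_congr rfl fun A hA => ?_
      rw [mem_filter] at hA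
      rw [hw]
      simp only
      rw [if_neg (h1 j A hA.1).1.ne_empty]
    rw [hwf]
    by_cases hcase : (P j).card < ρ
    · rw [if_pos hcase, sum_singleton]
      have hw0 : w j ∅ = (ρ - (P j).card) * u := by rw [hw]; simp
      rw [hw0]
      have hmu : (ρ - (P j).card) * u + (P j).card * u = ρ * u := by
        rw [← Nat.add_mul, Nat.sub_add_cancel (le_of_lt hcase)]
      have := hfiltersum j
      omega
    · rw [if_neg hcase, sum_empty, zero_add]
      have hcρ : (P j).card = ρ := le_antisymm (h4 j) (by omega)
      rw [hfiltersum j, hcρ, ← hm]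
  -- the per-candidate demand bound
  have key_A : ∀ A ∈ C, ∀ J : Finset (Fin ((m - 1).choose (u - 1))),
      (∑ j ∈ J.filter (fun j => A ∈ avail j), w j A) ≤ d A * (m - s) := by
    intro A hA J
    rcases Finset.eq_empty_or_nonempty A with rfl | hAne
    · -- A = ∅
      have hsub : J.filter (fun j => (∅ : Finset (Fin m)) ∈ avail j) ⊆ univ :=
        subset_univ _
      have hle : ∑ j ∈ J.filter (fun j => (∅ : Finset (Fin m)) ∈ avail j), w j ∅
          ≤ ∑ j ∈ (univ : Finset (Fin ((m - 1).choose (u - 1)))), w j ∅ :=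
        sum_le_sum_of_subset hsub
      refine le_trans hle ?_
      have hwsum : ∑ j ∈ (univ : Finset (Fin ((m - 1).choose (u - 1)))), w j ∅
          = (∑ j ∈ (univ : Finset (Fin ((m - 1).choose (u - 1)))), (ρ - (P j).card)) * u := by
        rw [sum_mul]
        exact sum_congr rfl fun j _ => by simp [hw]
      -- ∑ (ρ - card) = (m-s).choose u
      have hU : ∀ j, P j = ((Ivs m s).powerset.filter
          (fun A => 0 < A.card ∧ A.card ≤ u)).filter (fun A => A ∈ P j) := by
        intro j
        ext B
        simp only [mem_filter, mem_powerset]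
        constructor
        · intro hB
          obtain ⟨hne, hle', hsub'⟩ := h1 j B hB
          exact ⟨⟨hsub', card_pos.mpr hne, hle'⟩, hB⟩
        · tauto
      have hsc : ∑ j ∈ (univ : Finset (Fin ((m - 1).choose (u - 1)))), (P j).card
          = ∑ B ∈ (Ivs m s).powerset.filter (fun A => 0 < A.card ∧ A.card ≤ u),
              (univ.filter (fun j => B ∈ P j)).card := by
        have hstep : ∀ j, (P j).card = ∑ B ∈ (Ivs m s).powerset.filter
            (fun A => 0 < A.card ∧ A.card ≤ u), (if B ∈ P j then 1 else 0) := by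
          intro j
          conv_lhs => rw [hU j]
          rw [Finset.card_filter]
        rw [sum_congr rfl (fun j _ => hstep j), Finset.sum_comm]
        exact sum_congr rfl fun B _ => (Finset.card_filter _ _).symm
      have hcount : ∀ B ∈ (Ivs m s).powerset.filter (fun A => 0 < A.card ∧ A.card ≤ u),
          (univ.filter (fun j => B ∈ P j)).card = (m - s).choose (u - B.card) := by
        intro B hB
        rw [mem_filter, mem_powerset] at hB
        exact h5 B (card_pos.mp hB.2.1) hB.2.2 hB.1
      rw [sum_congr rfl hcount] at hsc
      have hsum2 := sum_counts (m := m) hu hs.le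
      have hkρ := k_mul_rho hu hρ hm
      have hrhosum : ∑ j ∈ (univ : Finset (Fin ((m - 1).choose (u - 1)))),
          (ρ - (P j).card) + ∑ j ∈ (univ : Finset (Fin ((m - 1).choose (u - 1)))),
          (P j).card = m.choose u := by
        rw [← sum_add_distrib]
        have : ∀ j ∈ (univ : Finset (Fin ((m - 1).choose (u - 1)))),
            ρ - (P j).card + (P j).card = ρ := fun j _ => Nat.sub_add_cancel (h4 j)
        rw [sum_congr rfl this, sum_const, card_univ, Fintype.card_fin, smul_eq_mul, hkρ]
      have hrho : ∑ j ∈ (univ : Finset (Fin ((m - 1).choose (u - 1)))),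
          (ρ - (P j).card) = (m - s).choose u := by omega
      rw [hwsum, hrho]
      -- (m-s).choose u * u = d ∅ * (m - s)
      have hsc2 : (m - s) * ((m - s - 1).choose (u - 1)) = (m - s).choose u * u := by
        have := scale_choose (t := m - s) (c := u) hms hu
        simpa using this
      have hdval : d (∅ : Finset (Fin m)) = (m - s - 1).choose (u - 1) := by
        rw [hd]; simp
      rw [hdval]
      exact le_of_eq (by rw [← hsc2, Nat.mul_comm])
    · -- A nonempty
      have hAC := hA
      rw [hC, mem_filter, mem_powerset] at hAC
      obtain ⟨hAsub, hAu⟩ := hAC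
      have hwA : ∀ j, w j A = u - A.card := by
        intro j; rw [hw]; simp only; rw [if_neg hAne.ne_empty]
      have hsub : J.filter (fun j => A ∈ avail j) ⊆ univ.filter (fun j => A ∈ P j) := by
        intro j hj
        rw [mem_filter] at hj ⊢
        rw [mem_avail] at hj
        rcases hj.2 with ⟨hAe, -⟩ | ⟨hAP, -⟩
        · exact absurd hAe hAne.ne_empty
        · exact ⟨mem_univ j, hAP⟩
      have hle : ∑ j ∈ J.filter (fun j => A ∈ avail j), w j A
          ≤ ∑ j ∈ univ.filter (fun j => A ∈ P j), w j A :=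
        sum_le_sum_of_subset hsub
      refine le_trans hle ?_
      rw [sum_congr rfl (fun j _ => hwA j), sum_const, smul_eq_mul,
        h5 A hAne hAu.le hAsub]
      have hsc2 : (m - s) * ((m - s - 1).choose (u - A.card - 1))
          = (m - s).choose (u - A.card) * (u - A.card) := by
        exact scale_choose hms (by omega)
      have hdval : d A = (m - s - 1).choose (u - A.card - 1) := by
        rw [hd]
        simp only
        congr 1
        omega
      rw [hdval]
      exact le_of_eq (by rw [← hsc2, Nat.mul_comm])
  -- the bipartite graph for Hall's theorem
  set t : Fin ((m - 1).choose (u - 1)) → Finset (Finset (Fin m) × ℕ) := fun j =>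
    (avail j).biUnion (fun A => {A} ×ˢ Finset.range (d A)) with ht
  have hcardbiU : ∀ J : Finset (Fin ((m - 1).choose (u - 1))),
      (J.biUnion t).card = ∑ A ∈ J.biUnion avail, d A := by
    intro J
    have hre : J.biUnion t
        = (J.biUnion avail).biUnion (fun A => {A} ×ˢ Finset.range (d A)) := by
      rw [ht]
      exact (Finset.biUnion_biUnion J avail _).symm
    rw [hre, card_biUnion]
    · exact sum_congr rfl fun A _ => by simp
    · intro A hA B hB hAB
      rw [Function.onFun, Finset.disjoint_left]
      rintro ⟨a, b⟩ hab hab'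
      simp only [Finset.mem_product, Finset.mem_singleton] at hab hab'
      exact hAB (by rw [← hab.1, hab'.1])
  have hHall : ∀ J : Finset (Fin ((m - 1).choose (u - 1))),
      J.card ≤ (J.biUnion t).card := by
    intro J
    rw [hcardbiU]
    have h1' : ∀ j ∈ J, ∑ A ∈ avail j, w j A = m - s := fun j _ => by
      have := class_sum j; omega
    have hJ : J.card * (m - s) = ∑ j ∈ J, ∑ A ∈ avail j, w j A := by
      rw [sum_congr rfl h1', sum_const, smul_eq_mul]
    have hexp : ∀ j ∈ J, ∑ A ∈ avail j, w j A
        = ∑ A ∈ J.biUnion avail, if A ∈ avail j then w j A else 0 := by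
      intro j hj
      rw [← sum_filter]
      congr 1
      ext A
      simp only [mem_filter, mem_biUnion]
      constructor
      · intro hA; exact ⟨⟨j, hj, hA⟩, hA⟩
      · tauto
    have hswap : ∑ j ∈ J, ∑ A ∈ avail j, w j A
        = ∑ A ∈ J.biUnion avail, ∑ j ∈ J.filter (fun j => A ∈ avail j), w j A := by
      rw [sum_congr rfl hexp, Finset.sum_comm]
      exact sum_congr rfl fun A _ => (sum_filter _ _).symm
    have hle : ∑ j ∈ J, ∑ A ∈ avail j, w j A
        ≤ (∑ A ∈ J.biUnion avail, d A) * (m - s) := by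
      rw [hswap, sum_mul]
      refine sum_le_sum fun A hA => ?_
      rw [mem_biUnion] at hA
      obtain ⟨j0, -, hj0⟩ := hA
      exact key_A A (avail_sub_C j0 hj0) J
    exact Nat.le_of_mul_le_mul_right (le_trans (le_of_eq hJ) hle) hms
  obtain ⟨f, hfinj, hft⟩ :=
    (Finset.all_card_le_biUnion_card_iff_exists_injective t).mp hHall
  set g : Fin ((m - 1).choose (u - 1)) → Finset (Fin m) := fun j => (f j).1 with hg
  have hgprop : ∀ j, g j ∈ avail j ∧ (f j).2 < d (g j) := by
    intro j
    have hmem := hft j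
    rw [ht] at hmem
    simp only [mem_biUnion, Finset.mem_product, Finset.mem_singleton,
      Finset.mem_range] at hmem
    obtain ⟨A, hA, hfa, hfb⟩ := hmem
    rw [hg]
    simp only
    rw [hfa]
    exact ⟨hA, hfb⟩
  have hgC : ∀ j, g j ∈ C := fun j => avail_sub_C j (hgprop j).1
  have fib_le : ∀ A ∈ C, (univ.filter (fun j => g j = A)).card ≤ d A := by
    intro A hA
    have hcl : (univ.filter (fun j => g j = A)).card ≤ (Finset.range (d A)).card := by
      apply Finset.card_le_card_of_injOn (fun j => (f j).2)
      · intro j hj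
        rw [Finset.mem_coe, mem_filter] at hj
        rw [Finset.mem_coe, Finset.mem_range]
        have h2' := (hgprop j).2
        rwa [hj.2] at h2'
      · intro j hj j' hj' hee
        rw [Finset.mem_coe, mem_filter] at hj hj'
        apply hfinj
        apply Prod.ext
        · show (f j).1 = (f j').1
          rw [show (f j).1 = g j from rfl, show (f j').1 = g j' from rfl, hj.2, hj'.2]
        · exact hee
    simpa using hcl
  have fib_sum : ∑ A ∈ C, (univ.filter (fun j => g j = A)).card
      = (m - 1).choose (u - 1) := by
    have hfw := Finset.card_eq_sum_card_fiberwise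
      (fun j (_ : j ∈ (univ : Finset (Fin ((m - 1).choose (u - 1))))) => hgC j)
    rw [card_univ, Fintype.card_fin] at hfw
    exact hfw.symm
  have sum_dC : ∑ A ∈ C, d A = (m - 1).choose (u - 1) := by
    rw [hC, hd]
    exact sum_d hu hs
  have fib_eq : ∀ A ∈ C, (univ.filter (fun j => g j = A)).card = d A := by
    by_contra hcon
    push_neg at hcon
    obtain ⟨A0, hA0, hne⟩ := hcon
    have hlt : (univ.filter (fun j => g j = A0)).card < d A0 :=
      lt_of_le_of_ne (fib_le A0 hA0) hne
    have : ∑ A ∈ C, (univ.filter (fun j => g j = A)).card < ∑ A ∈ C, d A :=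
      Finset.sum_lt_sum (fun A hA => fib_le A hA) ⟨A0, hA0, hlt⟩
    omega
  -- facts about g
  have hgsub : ∀ j, g j ⊆ Ivs m s ∧ (g j).card < u := by
    intro j
    have hj := hgC j
    rw [hC, mem_filter, mem_powerset] at hj
    exact hj
  have hxg : ∀ j, x ∉ g j := fun j h => not_mem_Ivs hs ((hgsub j).1 h)
  have hgP : ∀ j, g j ∈ P j ∨ (g j = ∅ ∧ (P j).card < ρ) := by
    intro j
    have := (hgprop j).1
    rw [mem_avail] at this
    tauto
  have hgPne : ∀ j, (g j).Nonempty → g j ∈ P j := by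
    intro j hne
    rcases hgP j with h | ⟨he, -⟩
    · exact h
    · exact absurd he hne.ne_empty
  have hxnotP : ∀ j, ∀ A ∈ P j, x ∉ A :=
    fun j A hA h => not_mem_Ivs hs ((h1 j A hA).2.2 h)
  have memP' : ∀ j (B : Finset (Fin m)),
      B ∈ insert (insert x (g j)) ((P j).erase (g j)) ↔
        (B = insert x (g j) ∨ (B ∈ P j ∧ B ≠ g j)) := by
    intro j B
    simp only [mem_insert, mem_erase]
    tauto
  refine ⟨fun j => insert (insert x (g j)) ((P j).erase (g j)), ?_, ?_, ?_, ?_, ?_⟩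
  · -- (1) part shapes
    intro j A hA
    rw [memP'] at hA
    rcases hA with rfl | ⟨hAP, -⟩
    · refine ⟨insert_nonempty _ _, ?_, ?_⟩
      · rw [card_insert_of_notMem (hxg j)]
        have := (hgsub j).2
        omega
      · rw [Ivs_succ hs]
        exact insert_subset_insert _ (hgsub j).1
    · obtain ⟨hne, hle, hsub'⟩ := h1 j A hAP
      refine ⟨hne, hle, hsub'.trans ?_⟩
      rw [Ivs_succ hs]
      exact subset_insert _ _
  · -- (2) pairwise disjoint
    intro j A hA B hB hAB
    rw [memP'] at hA hB
    rcases hA with rfl | ⟨hAP, hAg⟩ <;> rcases hB with rfl | ⟨hBP, hBg⟩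
    · exact absurd rfl hAB
    · refine Finset.disjoint_left.mpr ?_
      intro y hy hyB
      rcases mem_insert.mp hy with rfl | hyg
      · exact hxnotP j B hBP hyB
      · have hgj : g j ∈ P j := hgPne j ⟨y, hyg⟩
        exact (Finset.disjoint_left.mp
          (h2 j (g j) hgj B hBP (Ne.symm hBg))) hyg hyB
    · refine Finset.disjoint_right.mpr ?_
      intro y hy hyA
      rcases mem_insert.mp hy with rfl | hyg
      · exact hxnotP j A hAP hyA
      · have hgj : g j ∈ P j := hgPne j ⟨y, hyg⟩
        exact (Finset.disjoint_left.mp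
          (h2 j (g j) hgj A hAP (Ne.symm hAg))) hyg hyA
    · exact h2 j A hAP B hBP hAB
  · -- (3) biUnion is Ivs (s+1)
    intro j
    ext y
    rw [Ivs_succ hs]
    simp only [mem_biUnion, id_eq, mem_insert]
    constructor
    · rintro ⟨B, hB, hyB⟩
      rcases hB with rfl | hB'
      · rcases mem_insert.mp hyB with rfl | hyg
        · exact Or.inl rfl
        · exact Or.inr ((hgsub j).1 hyg)
      · exact Or.inr ((h1 j B (mem_of_mem_erase hB')).2.2 hyB)
    · rintro (rfl | hy)
      · exact ⟨insert x (g j), Or.inl rfl, mem_insert_self _ _⟩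
      · have hybi : y ∈ (P j).biUnion id := by rw [h3 j]; exact hy
        rw [mem_biUnion] at hybi
        obtain ⟨B, hBP, hyB⟩ := hybi
        by_cases hBg : B = g j
        · exact ⟨insert x (g j), Or.inl rfl,
            by subst hBg; exact mem_insert_of_mem hyB⟩
        · exact ⟨B, Or.inr (mem_erase.mpr ⟨hBg, hBP⟩), hyB⟩
  · -- (4) class sizes
    intro j
    show (insert (insert x (g j)) ((P j).erase (g j))).card ≤ ρ
    rcases hgP j with hgj | ⟨hge, hlt⟩
    · have hcard := card_insert_le (insert x (g j)) ((P j).erase (g j))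
      rw [card_erase_of_mem hgj] at hcard
      have h1c : 1 ≤ (P j).card := card_pos.mpr ⟨g j, hgj⟩
      have := h4 j
      omega
    · rw [hge, erase_eq_of_notMem (hPempty j)]
      have hcard := card_insert_le (insert x (∅ : Finset (Fin m))) (P j)
      omega
  · -- (5) the counting invariant
    intro B hBne hBu hBsub
    by_cases hxB : x ∈ B
    · have hiff : ∀ j, (B ∈ insert (insert x (g j)) ((P j).erase (g j))) ↔
          g j = B.erase x := by
        intro j
        rw [memP']
        constructor
        · rintro (rfl | ⟨hBP, -⟩)
          · rw [Finset.erase_insert (hxg j)]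
          · exact absurd hxB (hxnotP j B hBP)
        · intro h
          left
          rw [h, Finset.insert_erase hxB]
      rw [filter_congr (fun j _ => by rw [hiff j])]
      have hBex : B.erase x ∈ C := by
        rw [hC, mem_filter, mem_powerset]
        constructor
        · intro y hy
          rw [mem_erase] at hy
          have hm' := hBsub hy.2
          rw [Ivs_succ hs, mem_insert] at hm'
          rcases hm' with h' | h'
          · exact absurd h' hy.1
          · exact h'
        · rw [card_erase_of_mem hxB]
          have : 1 ≤ B.card := card_pos.mpr ⟨x, hxB⟩
          omega
      rw [fib_eq _ hBex, hd]
      simp only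
      rw [card_erase_of_mem hxB]
      have h1c : 1 ≤ B.card := card_pos.mpr ⟨x, hxB⟩
      congr 1 <;> omega
    · have hBIvs : B ⊆ Ivs m s := by
        intro y hy
        have hm' := hBsub hy
        rw [Ivs_succ hs, mem_insert] at hm'
        rcases hm' with rfl | h'
        · exact absurd hy hxB
        · exact h'
      have hiff : ∀ j, (B ∈ insert (insert x (g j)) ((P j).erase (g j))) ↔
          (B ∈ P j ∧ ¬ g j = B) := by
        intro j
        rw [memP']
        constructor
        · rintro (rfl | ⟨hBP', hBg'⟩)
          · exact absurd (mem_insert_self x (g j)) hxB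
          · exact ⟨hBP', fun h => hBg' h.symm⟩
        · rintro ⟨hBP', hgB'⟩
          right
          exact ⟨hBP', fun h => hgB' h.symm⟩
      rw [filter_congr (fun j _ => by rw [hiff j])]
      have hsubf : univ.filter (fun j => g j = B) ⊆ univ.filter (fun j => B ∈ P j) := by
        intro j hj
        rw [mem_filter] at hj ⊢
        refine ⟨mem_univ j, ?_⟩
        rcases hgP j with h | ⟨he, -⟩
        · rwa [hj.2] at h
        · rw [hj.2] at he
          exact absurd he hBne.ne_empty
      have hsplit : univ.filter (fun j => B ∈ P j ∧ ¬ g j = B)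
          = univ.filter (fun j => B ∈ P j) \ univ.filter (fun j => g j = B) := by
        ext j
        simp only [mem_filter, mem_sdiff, mem_univ, true_and]
      rw [hsplit, card_sdiff_of_subset hsubf, h5 B hBne hBu hBIvs]
      by_cases hBcu : B.card < u
      · have hBC : B ∈ C := by
          rw [hC, mem_filter, mem_powerset]
          exact ⟨hBIvs, hBcu⟩
        rw [fib_eq _ hBC, hd]
        simp only
        have hp : (m - s).choose (u - B.card)
            = (m - s - 1).choose (u - 1 - B.card) + (m - s - 1).choose (u - B.card) := by
          have e1 : m - s = (m - s - 1) + 1 := by omega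
          have e2 : u - B.card = (u - 1 - B.card) + 1 := by omega
          rw [e1, e2, Nat.choose_succ_succ, ← e2]
          have e4 : m - s - 1 + 1 - 1 = m - s - 1 := by omega
          rw [e4]
          have e5 : (u - 1 - B.card).succ = u - B.card := by omega
          rw [e5]
        have e3 : m - (s + 1) = m - s - 1 := by omega
        rw [e3]
        omega
      · have hBcu' : B.card = u := by omega
        have hfib0 : univ.filter (fun j => g j = B) = ∅ := by
          rw [filter_eq_empty_iff]
          intro j _
          intro h
          have hlt := (hgsub j).2
          rw [h, hBcu'] at hlt
          omega
        rw [hfib0]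
        simp [hBcu']

lemma exists_good {m u ρ : ℕ} (hu : 0 < u) (hρ : 0 < ρ) (hm : m = ρ * u) :
    ∀ s, s ≤ m → ∃ P, good m u ρ s P := by
  intro s
  induction s with
  | zero => exact fun _ => ⟨_, good_zero m u ρ⟩
  | succ t ih =>
      intro h
      obtain ⟨P, hP⟩ := ih (by omega)
      exact step hu hρ hm (by omega) P hP

theorem baranyai {m u ρ : ℕ} (hu : 0 < u) (hρ : 0 < ρ) (hm : m = ρ * u) :
    ∃ P : Fin ((m - 1).choose (u - 1)) → Finset (Finset (Fin m)),
      (∀ j, ∀ A ∈ P j, A.card = u) ∧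
      (∀ j, (P j).card = ρ) ∧
      (∀ j, ∀ A ∈ P j, ∀ B ∈ P j, A ≠ B → Disjoint A B) ∧
      (∀ j, (P j).biUnion id = univ) ∧
      (∀ S : Finset (Fin m), S.card = u →
        (univ.filter (fun j => S ∈ P j)).card = 1) := by
  obtain ⟨P, h1, h2, h3, h4, h5⟩ := exists_good hu hρ hm m le_rfl
  have hIvs : Ivs m m = univ := Ivs_top m
  rw [hIvs] at h3
  have hcards : ∀ j, ∀ A ∈ P j, A.card = u := by
    intro j A hA
    obtain ⟨hne, hle, -⟩ := h1 j A hA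
    by_contra hcu
    have hlt : A.card < u := lt_of_le_of_ne hle hcu
    have := h5 A hne hle (by rw [hIvs]; exact subset_univ A)
    rw [Nat.sub_self, Nat.choose_eq_zero_of_lt (show 0 < u - A.card by omega)] at this
    have : j ∈ univ.filter (fun j => A ∈ P j) := by simp [hA]
    rw [Finset.card_eq_zero] at *
    simp_all
  refine ⟨P, hcards, ?_, h2, h3, ?_⟩
  · intro j
    have hcb : ((P j).biUnion id).card = ∑ A ∈ P j, A.card :=
      card_biUnion (fun A hA B hB hAB => h2 j A hA B hB hAB)
    rw [h3 j] at hcb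
    have : ∑ A ∈ P j, A.card = (P j).card * u := by
      rw [Finset.sum_congr rfl (hcards j), Finset.sum_const, smul_eq_mul]
    rw [this] at hcb
    have : m = (P j).card * u := by simpa using hcb
    have := this.symm.trans hm
    exact Nat.eq_of_mul_eq_mul_right hu (by omega)
  · intro S hS
    have := h5 S (Finset.card_pos.mp (by omega)) hS.le (by rw [hIvs]; exact subset_univ S)
    rwa [Nat.sub_self, hS, Nat.sub_self, Nat.choose_self] at this

end BarAux

open Finset in
theorem aux_main (ρ u m : ℕ) (hρ : 1 < ρ) (hρodd : Odd ρ) (hu : 0 < u)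
    (hm : m = ρ * u)
    (e : Fin ((m + 1).choose u) ≃
      {S : Finset (Fin (m + 1)) // S ∈ Finset.powersetCard u (Finset.univ : Finset (Fin (m + 1)))})
    (A G : Matrix (Fin (m + 1)) (Fin ((m + 1).choose u)) (ZMod 2))
    (hA : ∀ i ℓ, A i ℓ = if i ∈ (e ℓ : Finset (Fin (m + 1))) then 1 else 0)
    (hG : ∀ i ℓ, G i ℓ = 1 + A i ℓ) :
    ∀ i : Fin (m + 1),
      (Finset.univ.filter (fun ℓ => G i ℓ = 1) =
        Finset.univ.filter (fun ℓ => i ∉ (e ℓ : Finset (Fin (m + 1))))) ∧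
      ((Finset.univ.filter (fun ℓ => G i ℓ = 1)).card = (m + 1 - 1).choose u) ∧
      (((Finset.univ.filter (fun ℓ => G i ℓ = 1)).card : ℚ) =
        (1 - (u : ℚ) / ((m + 1 : ℕ) : ℚ)) * ((m + 1).choose u)) ∧
      (∃ T : Fin ((m + 1 - 2).choose (u - 1)) → Finset (Fin ((m + 1).choose u)),
        (∀ j j', j ≠ j' → Disjoint (T j) (T j')) ∧
        (Finset.univ.biUnion T = Finset.univ.filter (fun ℓ => G i ℓ = 1)) ∧
        (∀ j, (T j).card = ρ) ∧
        (∀ j, ∑ ℓ ∈ T j, (fun r => G r ℓ) = (Pi.single i 1 : Fin (m + 1) → ZMod 2))) := by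
  classical
  intro i
  obtain ⟨t2, ht2⟩ := hρodd
  have h2z : (2 : ZMod 2) = 0 := rfl
  have hG1 : ∀ (r : Fin (m + 1)) ℓ,
      G r ℓ = if r ∈ (e ℓ : Finset (Fin (m + 1))) then 0 else 1 := by
    intro r ℓ
    rw [hG, hA]
    by_cases h : r ∈ (e ℓ : Finset (Fin (m + 1)))
    · rw [if_pos h, if_pos h]; decide
    · rw [if_neg h, if_neg h, add_zero]
  have hfilter : Finset.univ.filter (fun ℓ => G i ℓ = 1)
      = Finset.univ.filter (fun ℓ => i ∉ (e ℓ : Finset (Fin (m + 1)))) := by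
    apply filter_congr
    intro ℓ _
    rw [hG1]
    by_cases h : i ∈ (e ℓ : Finset (Fin (m + 1)))
    · simp [h]
    · simp [h]
  obtain ⟨P, hP1, hP2, hP3, hP4, hP5⟩ := BarAux.baranyai (m := m) hu (by omega) hm
  have hPuniq : ∀ S : Finset (Fin m), ∀ j j', S ∈ P j → S ∈ P j' → j = j' := by
    intro S j j' hj hj'
    have hcard := hP5 S (hP1 j S hj)
    rw [Finset.card_eq_one] at hcard
    obtain ⟨a, ha⟩ := hcard
    have h1 : j ∈ univ.filter (fun j => S ∈ P j) := by simp [hj]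
    have h2 : j' ∈ univ.filter (fun j => S ∈ P j) := by simp [hj']
    rw [ha, mem_singleton] at h1 h2
    rw [h1, h2]
  have hPex : ∀ S : Finset (Fin m), S.card = u → ∃ j, S ∈ P j := by
    intro S hS
    have hcard := hP5 S hS
    have hne : (univ.filter (fun j => S ∈ P j)).Nonempty := by
      rw [← card_pos, hcard]; omega
    obtain ⟨j, hj⟩ := hne
    rw [mem_filter] at hj
    exact ⟨j, hj.2⟩
  have hembnei : ∀ y : Fin m, i.succAboveEmb y ≠ i := fun y => Fin.succAbove_ne i y
  have hφu : ∀ Q : Finset (Fin m), Q.card = u →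
      Q.map i.succAboveEmb ∈ Finset.powersetCard u (univ : Finset (Fin (m + 1))) := by
    intro Q hQ
    rw [Finset.mem_powersetCard]
    exact ⟨subset_univ _, by rw [Finset.card_map, hQ]⟩
  set T : Fin ((m - 1).choose (u - 1)) → Finset (Fin ((m + 1).choose u)) := fun j =>
    univ.filter (fun ℓ => ∃ Q ∈ P j, Q.map i.succAboveEmb = (e ℓ : Finset (Fin (m + 1)))) with hT
  have hTmem : ∀ j ℓ, ℓ ∈ T j ↔
      ∃ Q ∈ P j, Q.map i.succAboveEmb = (e ℓ : Finset (Fin (m + 1))) := by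
    intro j ℓ
    rw [hT, mem_filter]
    exact ⟨fun h => h.2, fun h => ⟨mem_univ ℓ, h⟩⟩
  have hTavoid : ∀ j ℓ, ℓ ∈ T j → i ∉ (e ℓ : Finset (Fin (m + 1))) := by
    intro j ℓ hℓ hi'
    rw [hTmem] at hℓ
    obtain ⟨Q, hQ, hQe⟩ := hℓ
    rw [← hQe, Finset.mem_map] at hi'
    obtain ⟨y, -, hy⟩ := hi'
    exact hembnei y hy
  have hTdisj : ∀ j j', j ≠ j' → Disjoint (T j) (T j') := by
    intro j j' hjj'
    rw [Finset.disjoint_left]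
    intro ℓ hℓ hℓ'
    rw [hTmem] at hℓ hℓ'
    obtain ⟨Q, hQ, hQe⟩ := hℓ
    obtain ⟨Q', hQ', hQe'⟩ := hℓ'
    have hQQ : Q = Q' := Finset.map_injective i.succAboveEmb (by rw [hQe, hQe'])
    subst hQQ
    exact hjj' (hPuniq Q j j' hQ hQ')
  have hTbiU : univ.biUnion T
      = univ.filter (fun ℓ => i ∉ (e ℓ : Finset (Fin (m + 1)))) := by
    ext ℓ
    rw [mem_biUnion, mem_filter]
    constructor
    · rintro ⟨j, -, hℓ⟩
      exact ⟨mem_univ ℓ, hTavoid j ℓ hℓ⟩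
    · rintro ⟨-, hi'⟩
      have hsub : (e ℓ : Finset (Fin (m + 1))) ⊆ univ.map i.succAboveEmb := by
        intro z hz
        rw [Finset.mem_map]
        have hzi : z ≠ i := fun h => hi' (h ▸ hz)
        obtain ⟨y, hy⟩ := Fin.exists_succAbove_eq hzi
        exact ⟨y, mem_univ y, hy⟩
      rw [Finset.subset_map_iff] at hsub
      obtain ⟨Q, -, hQ⟩ := hsub
      have hQcard : Q.card = u := by
        have hc := (Finset.mem_powersetCard.mp (e ℓ).2).2
        rw [hQ, Finset.card_map] at hc
        exact hc
      obtain ⟨j, hj⟩ := hPex Q hQcard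
      refine ⟨j, mem_univ j, ?_⟩
      rw [hTmem]
      exact ⟨Q, hj, hQ.symm⟩
  have hTcard : ∀ j, (T j).card = ρ := by
    intro j
    have hbij : (P j).card = (T j).card := by
      apply Finset.card_bij
        (fun Q hQ => e.symm ⟨Q.map i.succAboveEmb, hφu Q (hP1 j Q hQ)⟩)
      · intro Q hQ
        rw [hTmem]
        refine ⟨Q, hQ, ?_⟩
        rw [Equiv.apply_symm_apply]
      · intro Q hQ Q' hQ' heq
        have h2' := e.symm.injective heq
        have h3' : Q.map i.succAboveEmb = Q'.map i.succAboveEmb :=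
          congrArg Subtype.val h2'
        exact Finset.map_injective i.succAboveEmb h3'
      · intro ℓ hℓ
        rw [hTmem] at hℓ
        obtain ⟨Q, hQ, hQe⟩ := hℓ
        refine ⟨Q, hQ, ?_⟩
        have hsub' : (⟨Q.map i.succAboveEmb, hφu Q (hP1 j Q hQ)⟩ :
            {S : Finset (Fin (m + 1)) // S ∈ Finset.powersetCard u univ}) = e ℓ :=
          Subtype.ext hQe
        rw [hsub', Equiv.symm_apply_apply]
    rw [← hbij, hP2 j]
  have hcount1 : ∀ j (r : Fin (m + 1)), r ≠ i →
      ((T j).filter (fun ℓ => r ∈ (e ℓ : Finset (Fin (m + 1))))).card = 1 := by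
    intro j r hr
    obtain ⟨y, hy⟩ := Fin.exists_succAbove_eq hr
    have hybi : y ∈ (P j).biUnion id := by rw [hP4 j]; exact mem_univ y
    rw [mem_biUnion] at hybi
    obtain ⟨Q0, hQ0, hyQ0⟩ := hybi
    rw [Finset.card_eq_one]
    refine ⟨e.symm ⟨Q0.map i.succAboveEmb, hφu Q0 (hP1 j Q0 hQ0)⟩, ?_⟩
    ext ℓ
    rw [mem_filter, mem_singleton, hTmem]
    constructor
    · rintro ⟨⟨Q, hQ, hQe⟩, hrℓ⟩
      rw [← hQe, Finset.mem_map] at hrℓ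
      obtain ⟨y', hy'Q, hy'⟩ := hrℓ
      have hyy : y' = y := i.succAboveEmb.injective (by rw [hy']; exact hy.symm)
      subst hyy
      have hQQ0 : Q = Q0 := by
        by_contra hne
        exact (Finset.disjoint_left.mp (hP3 j Q hQ Q0 hQ0 hne)) hy'Q hyQ0
      subst hQQ0
      have hsub' : (⟨Q.map i.succAboveEmb, hφu Q (hP1 j Q hQ)⟩ :
          {S : Finset (Fin (m + 1)) // S ∈ Finset.powersetCard u univ}) = e ℓ :=
        Subtype.ext hQe
      rw [hsub', Equiv.symm_apply_apply]
    · rintro rfl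
      refine ⟨⟨Q0, hQ0, ?_⟩, ?_⟩
      · rw [Equiv.apply_symm_apply]
      · rw [Equiv.apply_symm_apply]
        show r ∈ Q0.map i.succAboveEmb
        rw [Finset.mem_map]
        exact ⟨y, hyQ0, hy⟩
  have hsum : ∀ j, ∑ ℓ ∈ T j, (fun r => G r ℓ)
      = (Pi.single i 1 : Fin (m + 1) → ZMod 2) := by
    intro j
    funext r
    rw [Finset.sum_apply]
    have hrw : ∀ ℓ ∈ T j,
        G r ℓ = if r ∉ (e ℓ : Finset (Fin (m + 1))) then (1 : ZMod 2) else 0 := by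
      intro ℓ _
      rw [hG1]
      by_cases h : r ∈ (e ℓ : Finset (Fin (m + 1))) <;> simp [h]
    rw [sum_congr rfl hrw, Finset.sum_boole]
    by_cases hr : r = i
    · subst hr
      have hfeq : (T j).filter (fun ℓ => r ∉ (e ℓ : Finset (Fin (m + 1)))) = T j :=
        filter_true_of_mem (fun ℓ hℓ => hTavoid j ℓ hℓ)
      rw [hfeq, hTcard j, Pi.single_eq_same, ht2]
      push_cast
      rw [h2z]
      ring
    · have hfil := Finset.card_filter_add_card_filter_not
        (s := T j) (p := fun ℓ => r ∈ (e ℓ : Finset (Fin (m + 1))))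
      have h1' := hcount1 j r hr
      have hTc := hTcard j
      have hodd : ((T j).filter (fun ℓ => r ∉ (e ℓ : Finset (Fin (m + 1))))).card
          = 2 * t2 := by omega
      rw [hodd, Pi.single_eq_of_ne hr]
      push_cast
      rw [h2z]
      ring
  have hcard : (univ.filter (fun ℓ => G i ℓ = 1)).card = m.choose u := by
    rw [hfilter, ← hTbiU, card_biUnion (fun j _ j' _ h => hTdisj j j' h),
      sum_congr rfl (fun j _ => hTcard j), sum_const, card_univ, Fintype.card_fin,
      smul_eq_mul]
    exact BarAux.k_mul_rho hu (by omega) hm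
  have hch1 : (m + 1).choose u = m.choose (u - 1) + m.choose u := by
    have e2 : u = (u - 1) + 1 := by omega
    rw [e2, Nat.choose_succ_succ', ← e2]
  have hch2 : (m + 1) * m.choose (u - 1) = (m + 1).choose u * u := by
    have h := Nat.add_one_mul_choose_eq m (u - 1)
    rwa [Nat.sub_add_cancel hu] at h
  refine ⟨hfilter, ?_, ?_, ?_⟩
  · simpa using hcard
  · rw [hcard]
    have hn0 : ((m : ℚ) + 1) ≠ 0 := by positivity
    have k1 : ((m + 1).choose u : ℚ) = (m.choose (u - 1) : ℚ) + (m.choose u : ℚ) := by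
      exact_mod_cast hch1
    have k2 : ((m : ℚ) + 1) * (m.choose (u - 1) : ℚ)
        = ((m + 1).choose u : ℚ) * (u : ℚ) := by
      exact_mod_cast hch2
    push_cast
    field_simp
    nlinarith [k1, k2]
  · have hidx : m + 1 - 2 = m - 1 := by omega
    rw [hidx]
    refine ⟨T, hTdisj, ?_, hTcard, hsum⟩
    rw [hfilter]
    exact hTbiU



/-- Let `ρ > 1` be an odd integer, `u ≥ 1`, `n = ρu + 1`, `N = C(n,u)`. Let `A` be the
`n × N` matrix over `𝔽₂` whose columns are the characteristic vectors of all
`u`-element subsets of an `n`-element set (enumerated by a bijection `e`), and let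
`G` be its coordinatewise complement, `g_{iℓ} = 1 + a_{iℓ}`. Then for every `i`:
the set `Tᵢ = {ℓ : g_{iℓ} = 1}` consists exactly of the columns indexed by
`u`-subsets avoiding `i`, has cardinality `C(n−1,u) = (1 − u/n)·N`, and can be
partitioned into `k = C(n−2, u−1)` pairwise disjoint sets of cardinality `ρ` whose
column sums over `𝔽₂` each equal the `i`-th unit vector `eᵢ ∈ 𝔽₂ⁿ`. -/
theorem complement_incidence_matrix_structure
    (ρ u n N : ℕ) (hρ : 1 < ρ) (hρodd : Odd ρ) (hu : 0 < u)
    (hn : n = ρ * u + 1) (hN : N = n.choose u)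
    (e : Fin N ≃ {S : Finset (Fin n) // S ∈ Finset.powersetCard u (Finset.univ : Finset (Fin n))})
    (A G : Matrix (Fin n) (Fin N) (ZMod 2))
    (hA : ∀ i ℓ, A i ℓ = if i ∈ (e ℓ : Finset (Fin n)) then 1 else 0)
    (hG : ∀ i ℓ, G i ℓ = 1 + A i ℓ) :
    ∀ i : Fin n,
      (Finset.univ.filter (fun ℓ => G i ℓ = 1) =
        Finset.univ.filter (fun ℓ => i ∉ (e ℓ : Finset (Fin n)))) ∧
      ((Finset.univ.filter (fun ℓ => G i ℓ = 1)).card = (n - 1).choose u) ∧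
      (((Finset.univ.filter (fun ℓ => G i ℓ = 1)).card : ℚ) =
        (1 - (u : ℚ) / (n : ℚ)) * N) ∧
      (∃ T : Fin ((n - 2).choose (u - 1)) → Finset (Fin N),
        (∀ j j', j ≠ j' → Disjoint (T j) (T j')) ∧
        (Finset.univ.biUnion T = Finset.univ.filter (fun ℓ => G i ℓ = 1)) ∧
        (∀ j, (T j).card = ρ) ∧
        (∀ j, ∑ ℓ ∈ T j, (fun r => G r ℓ) = (Pi.single i 1 : Fin n → ZMod 2))) := by
  subst hN
  subst hn
  exact aux_main ρ u (ρ * u) hρ hρodd hu rfl e A G hA hG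
end

section
/- Let ρ > 1 be an odd integer, u a positive integer, n = ρu + 1, N = C(n,u), λ = 1 − u/n, and k = λN/ρ = C(n−2, u−1). Let G be the n × N matrix over 𝔽₂ whose columns are the coordinatewise complements of the characteristic vectors of all u-subsets of an n-element set, and let C(x) = xG. Fix for each i ∈ [n] a partition of T_i = {ℓ : g_{iℓ} = 1} into classes T_{i1}, …, T_{ik} of size ρ whose column sums over 𝔽₂ each equal e_i. Then for every x ∈ 𝔽₂^n, every i ∈ [n], and every y ∈ 𝔽₂^N with Δ(xG, y) ≤ δN, the number of classes j ∈ [k] satisfying Σ_{ℓ ∈ T_{ij}} y_ℓ = x_i is at least (1 − ρδ/λ)·k. -/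
/-- Let `ρ > 1` be odd, `u ≥ 1`, `n = ρu + 1`, `N = C(n,u)`, `λ = 1 − u/n`,
`k = λN/ρ = C(n−2, u−1)`. Let `G` be the `n × N` matrix over `𝔽₂` whose columns are
the coordinatewise complements of the characteristic vectors of all `u`-subsets of
an `n`-element set, with code `C(x) = xG`. Fix for each `i ∈ [n]` a partition of
`Tᵢ = {ℓ : g_{iℓ} = 1}` into classes `T_{i1}, …, T_{ik}` of size `ρ` whose column
sums over `𝔽₂` each equal `eᵢ`. Then for every `x ∈ 𝔽₂ⁿ`, every `i ∈ [n]`, and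
every `y ∈ 𝔽₂^N` with `Δ(xG, y) ≤ δN`, the number of classes `j ∈ [k]` satisfying
`Σ_{ℓ ∈ T_{ij}} y_ℓ = x_i` is at least `(1 − ρδ/λ)·k`. -/
theorem combinatorial_code_locally_decodable
    (ρ u n N : ℕ) (hρ : 1 < ρ) (hρodd : Odd ρ) (hu : 0 < u)
    (hn : n = ρ * u + 1) (hN : N = n.choose u)
    (e : Fin N ≃ {S : Finset (Fin n) // S ∈ Finset.powersetCard u (Finset.univ : Finset (Fin n))})
    (G : Matrix (Fin n) (Fin N) (ZMod 2))
    (hG : ∀ i ℓ, G i ℓ = if i ∈ (e ℓ : Finset (Fin n)) then 0 else 1)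
    (T : Fin n → Fin ((n - 2).choose (u - 1)) → Finset (Fin N))
    (hdisj : ∀ i j j', j ≠ j' → Disjoint (T i j) (T i j'))
    (hcover : ∀ i, Finset.univ.biUnion (T i) = Finset.univ.filter (fun ℓ => G i ℓ = 1))
    (hcard : ∀ i j, (T i j).card = ρ)
    (hsum : ∀ i j, ∑ ℓ ∈ T i j, (fun r => G r ℓ) = (Pi.single i 1 : Fin n → ZMod 2))
    (δ : ℝ) (x : Fin n → ZMod 2) (i : Fin n) (y : Fin N → ZMod 2)
    (hΔ : (hammingDist (Matrix.vecMul x G) y : ℝ) ≤ δ * N) :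
    (1 - (ρ : ℝ) * δ / (1 - (u : ℝ) / (n : ℝ))) * ((n - 2).choose (u - 1) : ℝ) ≤
      ((Finset.univ.filter
        (fun j : Fin ((n - 2).choose (u - 1)) => ∑ ℓ ∈ T i j, y ℓ = x i)).card : ℝ) := by
  classical
  -- basic positivity
  have hun : u < n := by nlinarith [hn, hρ, hu]
  have hnpos : 0 < n := by omega
  have hlam : (0:ℝ) < 1 - (u:ℝ)/(n:ℝ) := by
    rw [sub_pos, div_lt_one (by exact_mod_cast hnpos)]
    exact_mod_cast hun
  -- key counting identity:  (n-u) * N = n * (ρ * k)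
  have hnat : (n - u) * N = n * (ρ * (n - 2).choose (u - 1)) := by
    have h1 : (n-1).choose u * u = (ρ * u) * ((n-2).choose (u-1)) := by
      have h := Nat.add_one_mul_choose_eq (n-2) (u-1)
      have e1 : n - 2 + 1 = n - 1 := by omega
      have e2 : u - 1 + 1 = u := by omega
      have e3 : n - 1 = ρ * u := by omega
      rw [e1, e2] at h
      rw [← e3]; exact h.symm
    have h3 : (n-1).choose u = ρ * (n - 2).choose (u - 1) := by
      refine Nat.eq_of_mul_eq_mul_right hu ?_
      rw [h1]; ring
    have h4 : (n-1).choose u * n = n.choose u * (n - u) := by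
      have h := Nat.choose_mul_succ_eq (n-1) u
      have e1 : n - 1 + 1 = n := by omega
      rw [e1] at h
      rw [h]
    rw [hN, mul_comm (n - u), ← h4, h3]; ring
  have hkey : (1 - (u:ℝ)/(n:ℝ)) * (N:ℝ) = (ρ:ℝ) * ((n - 2).choose (u - 1) : ℝ) := by
    have hc : ((n:ℝ) - u) * N = n * (ρ * ((n - 2).choose (u - 1) : ℝ)) := by
      have h := congrArg (Nat.cast : ℕ → ℝ) hnat
      push_cast [Nat.cast_sub hun.le] at h
      exact h
    have hn0 : (n:ℝ) ≠ 0 := by exact_mod_cast hnpos.ne'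
    field_simp
    ring_nf
    ring_nf at hc
    linarith [hc]
  -- the codeword sums
  have hcode : ∀ j, ∑ ℓ ∈ T i j, Matrix.vecMul x G ℓ = x i := by
    intro j
    have h := hsum i j
    have h' : ∀ r, ∑ ℓ ∈ T i j, G r ℓ = (Pi.single i (1 : ZMod 2) : Fin n → ZMod 2) r := by
      intro r
      have := congrFun h r
      simpa using this
    calc ∑ ℓ ∈ T i j, Matrix.vecMul x G ℓ
        = ∑ ℓ ∈ T i j, ∑ r, x r * G r ℓ := by
          simp [Matrix.vecMul, dotProduct]
      _ = ∑ r, x r * ∑ ℓ ∈ T i j, G r ℓ := by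
          rw [Finset.sum_comm]; simp [Finset.mul_sum]
      _ = ∑ r, x r * (Pi.single i (1 : ZMod 2) : Fin n → ZMod 2) r := by
          simp_rw [h']
      _ = x i := by simp [Pi.single_apply]
  -- bad classes are few
  have hBD : (Finset.univ.filter
        (fun j : Fin ((n - 2).choose (u - 1)) => ¬ (∑ ℓ ∈ T i j, y ℓ = x i))).card
      ≤ hammingDist (Matrix.vecMul x G) y := by
    have hsub : (Finset.univ.filter
          (fun j : Fin ((n - 2).choose (u - 1)) => ¬ (∑ ℓ ∈ T i j, y ℓ = x i))).biUnion
          (fun j => (T i j).filter (fun ℓ => Matrix.vecMul x G ℓ ≠ y ℓ))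
        ⊆ Finset.univ.filter (fun ℓ => Matrix.vecMul x G ℓ ≠ y ℓ) := by
      intro ℓ hℓ
      simp only [Finset.mem_biUnion, Finset.mem_filter] at hℓ ⊢
      obtain ⟨j, _, _, h2⟩ := hℓ
      exact ⟨Finset.mem_univ _, h2⟩
    have hdisj' : ∀ j ∈ Finset.univ.filter
          (fun j : Fin ((n - 2).choose (u - 1)) => ¬ (∑ ℓ ∈ T i j, y ℓ = x i)),
        ∀ j' ∈ Finset.univ.filter
          (fun j : Fin ((n - 2).choose (u - 1)) => ¬ (∑ ℓ ∈ T i j, y ℓ = x i)), j ≠ j' →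
        Disjoint ((T i j).filter (fun ℓ => Matrix.vecMul x G ℓ ≠ y ℓ))
          ((T i j').filter (fun ℓ => Matrix.vecMul x G ℓ ≠ y ℓ)) := by
      intro j _ j' _ hjj'
      exact (hdisj i j j' hjj').mono (Finset.filter_subset _ _) (Finset.filter_subset _ _)
    have hh : hammingDist (Matrix.vecMul x G) y
        = (Finset.univ.filter (fun ℓ => Matrix.vecMul x G ℓ ≠ y ℓ)).card := rfl
    rw [hh]
    calc (Finset.univ.filter
          (fun j : Fin ((n - 2).choose (u - 1)) => ¬ (∑ ℓ ∈ T i j, y ℓ = x i))).card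
        = ∑ j ∈ Finset.univ.filter
            (fun j : Fin ((n - 2).choose (u - 1)) => ¬ (∑ ℓ ∈ T i j, y ℓ = x i)), 1 := by simp
      _ ≤ ∑ j ∈ Finset.univ.filter
            (fun j : Fin ((n - 2).choose (u - 1)) => ¬ (∑ ℓ ∈ T i j, y ℓ = x i)),
            ((T i j).filter (fun ℓ => Matrix.vecMul x G ℓ ≠ y ℓ)).card := by
          apply Finset.sum_le_sum
          intro j hj
          rw [Finset.mem_filter] at hj
          by_contra hle
          push_neg at hle
          have hempty : (T i j).filter (fun ℓ => Matrix.vecMul x G ℓ ≠ y ℓ) = ∅ := by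
            rw [← Finset.card_eq_zero]; omega
          have heq : ∀ ℓ ∈ T i j, Matrix.vecMul x G ℓ = y ℓ := by
            intro ℓ hℓ
            by_contra hne
            have : ℓ ∈ (T i j).filter (fun ℓ => Matrix.vecMul x G ℓ ≠ y ℓ) :=
              Finset.mem_filter.2 ⟨hℓ, hne⟩
            simp [hempty] at this
          exact hj.2 (by rw [← Finset.sum_congr rfl heq, hcode j])
      _ = ((Finset.univ.filter
            (fun j : Fin ((n - 2).choose (u - 1)) => ¬ (∑ ℓ ∈ T i j, y ℓ = x i))).biUnion
            (fun j => (T i j).filter (fun ℓ => Matrix.vecMul x G ℓ ≠ y ℓ))).card :=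
          (Finset.card_biUnion hdisj').symm
      _ ≤ (Finset.univ.filter (fun ℓ => Matrix.vecMul x G ℓ ≠ y ℓ)).card :=
          Finset.card_le_card hsub
  have hBδ : ((Finset.univ.filter
      (fun j : Fin ((n - 2).choose (u - 1)) => ¬ (∑ ℓ ∈ T i j, y ℓ = x i))).card : ℝ)
      ≤ δ * N := le_trans (by exact_mod_cast hBD) hΔ
  -- good + bad = k
  have hGB : (Finset.univ.filter
        (fun j : Fin ((n - 2).choose (u - 1)) => ∑ ℓ ∈ T i j, y ℓ = x i)).card
      + (Finset.univ.filter
        (fun j : Fin ((n - 2).choose (u - 1)) => ¬ (∑ ℓ ∈ T i j, y ℓ = x i))).card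
      = (n - 2).choose (u - 1) := by
    rw [Finset.card_filter_add_card_filter_not, Finset.card_univ, Fintype.card_fin]
  have hgood : ((Finset.univ.filter
      (fun j : Fin ((n - 2).choose (u - 1)) => ∑ ℓ ∈ T i j, y ℓ = x i)).card : ℝ)
      = ((n - 2).choose (u - 1) : ℝ) - ((Finset.univ.filter
        (fun j : Fin ((n - 2).choose (u - 1)) => ¬ (∑ ℓ ∈ T i j, y ℓ = x i))).card : ℝ) := by
    have h := congrArg (Nat.cast : ℕ → ℝ) hGB
    push_cast at h
    linarith
  rw [hgood]
  have hρkN : (ρ:ℝ) * ((n - 2).choose (u - 1) : ℝ) / (1 - (u:ℝ)/(n:ℝ)) = (N:ℝ) := by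
    rw [← hkey]
    exact mul_div_cancel_left₀ _ (ne_of_gt hlam)
  have hexp : (1 - (ρ:ℝ) * δ / (1 - (u:ℝ)/(n:ℝ))) * ((n - 2).choose (u - 1) : ℝ)
      = ((n - 2).choose (u - 1) : ℝ)
        - δ * ((ρ:ℝ) * ((n - 2).choose (u - 1) : ℝ) / (1 - (u:ℝ)/(n:ℝ))) := by
    field_simp
  rw [hexp, hρkN]
  linarith
end
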